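/- arXiv:2002.10045 — 6 statements merged into one kernel-verified Lean document; each statement's English description precedes it below -/
import Mathlib

section
/- The supremum, over all signaling schemes (S, π), of the seller's revenue under optimal per-signal pricing for the single type θ, namely Σ_{s : φ_θ(s)>0} φ_μ(s)·C(η^s(θ)), is equal to the supremum of Σ_{s∈S} φ_s·R(η^s)·C(η^s) over all finite index sets S, weights φ_s ≥ 0 and posteriors η^s ∈ Δ_n satisfying Σ_{s∈S} φ_s·η^s = θ (i.e., it equals the value of the concave closure of f(η) = R(η)·C(η) at the point θ). -/
open Finset
open scoped Classical

noncomputable section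

/-- The probability simplex in `ℝ^n`. -/
def simplex (n : ℕ) : Set (Fin n → ℝ) :=
  {η | (∀ ω, 0 ≤ η ω) ∧ ∑ ω, η ω = 1}

variable {n : ℕ} {A : Type*} [Fintype A] [Nonempty A]

/-- `u*(ω) = max_{a ∈ A} u(ω, a)`. -/
def uStar (u : Fin n → A → ℝ) (ω : Fin n) : ℝ :=
  Finset.univ.sup' Finset.univ_nonempty (u ω)

/-- The cost of uncertainty `C(η)`. -/
def Cost (u : Fin n → A → ℝ) (η : Fin n → ℝ) : ℝ :=
  ∑ ω, η ω * uStar u ω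
    - Finset.univ.sup' Finset.univ_nonempty (fun a => ∑ ω, η ω * u ω a)

/-- The likelihood ratio `R(η) = Σ_ω μ_ω η_ω / θ_ω`. -/
def Ratio (μ θ η : Fin n → ℝ) : ℝ := ∑ ω, μ ω * η ω / θ ω

/-- Values of the seller's revenue under optimal per-signal pricing, over all
signaling schemes `(S, π)`. -/
def RevenueSet (u : Fin n → A → ℝ) (μ θ : Fin n → ℝ) : Set ℝ :=
  {v | ∃ (m : ℕ) (π : Fin n → Fin m → ℝ),
    (∀ ω s, 0 ≤ π ω s) ∧ (∀ ω s, π ω s ≤ 1) ∧ (∀ ω, ∑ s, π ω s = 1) ∧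
    v = ∑ s ∈ Finset.univ.filter (fun s => 0 < ∑ ω, θ ω * π ω s),
          (∑ ω, μ ω * π ω s) *
            Cost u (fun ω => θ ω * π ω s / ∑ ω', θ ω' * π ω' s)}

/-- Values of `Σ_s φ_s · R(η^s) · C(η^s)` over all finite families of weights
`φ_s ≥ 0` and posteriors `η^s ∈ Δ_n` with `Σ_s φ_s · η^s = θ`. -/
def ConcaveSet (u : Fin n → A → ℝ) (μ θ : Fin n → ℝ) : Set ℝ :=
  {v | ∃ (m : ℕ) (φ : Fin m → ℝ) (η : Fin m → Fin n → ℝ),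
    (∀ s, 0 ≤ φ s) ∧ (∀ s, η s ∈ simplex n) ∧
    (∀ ω, ∑ s, φ s * η s ω = θ ω) ∧
    v = ∑ s, φ s * Ratio μ θ (η s) * Cost u (η s)}

/-- the supremum of the seller's revenue over signaling schemes equals
the supremum of `Σ_s φ_s R(η^s) C(η^s)` over feasible families, i.e. the value of the
concave closure of `f(η) = R(η)·C(η)` at `θ`. -/
theorem stmt0 (hn : 1 ≤ n) (u : Fin n → A → ℝ)
    (μ θ : Fin n → ℝ) (hμ : μ ∈ simplex n) (hθ : θ ∈ simplex n)
    (hθpos : ∀ ω, 0 < θ ω) :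
    sSup (RevenueSet u μ θ) = sSup (ConcaveSet u μ θ) := by
  have hθne : ∀ ω, θ ω ≠ 0 := fun ω => (hθpos ω).ne'
  suffices h : RevenueSet u μ θ = ConcaveSet u μ θ by rw [h]
  ext v
  constructor
  · rintro ⟨m, π, hπ0, hπ1, hπsum, hv⟩
    set Φ : Fin m → ℝ := fun s => ∑ ω, θ ω * π ω s with hΦ
    have hΦ0 : ∀ s, 0 ≤ Φ s := fun s =>
      Finset.sum_nonneg fun ω _ => mul_nonneg (hθpos ω).le (hπ0 ω s)
    -- if Φ s = 0 then each θ ω * π ω s = 0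
    have hzero : ∀ s, ¬ 0 < Φ s → ∀ ω, θ ω * π ω s = 0 := by
      intro s hs ω
      have h0 : Φ s = 0 := le_antisymm (not_lt.mp hs) (hΦ0 s)
      have := (Finset.sum_eq_zero_iff_of_nonneg
        (fun ω _ => mul_nonneg (hθpos ω).le (hπ0 ω s))).mp h0
      exact this ω (Finset.mem_univ ω)
    refine ⟨m, Φ, fun s => if 0 < Φ s then (fun ω => θ ω * π ω s / Φ s) else θ,
      hΦ0, ?_, ?_, ?_⟩
    · intro s
      by_cases hs : 0 < Φ s
      · simp only [if_pos hs]
        constructor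
        · intro ω
          exact div_nonneg (mul_nonneg (hθpos ω).le (hπ0 ω s)) (hΦ0 s)
        · rw [← Finset.sum_div, div_self hs.ne']
      · simp only [if_neg hs]; exact hθ
    · intro ω
      have key : ∀ s, Φ s * (if 0 < Φ s then (fun ω => θ ω * π ω s / Φ s) else θ) ω
          = θ ω * π ω s := by
        intro s
        by_cases hs : 0 < Φ s
        · simp only [if_pos hs]
          rw [mul_div_cancel₀ _ hs.ne']
        · simp only [if_neg hs]
          have h0 : Φ s = 0 := le_antisymm (not_lt.mp hs) (hΦ0 s)
          rw [h0, zero_mul, hzero s hs ω]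
      calc ∑ s, Φ s * (if 0 < Φ s then (fun ω => θ ω * π ω s / Φ s) else θ) ω
          = ∑ s, θ ω * π ω s := Finset.sum_congr rfl fun s _ => key s
        _ = θ ω * ∑ s, π ω s := by rw [Finset.mul_sum]
        _ = θ ω := by rw [hπsum ω, mul_one]
    · rw [hv]
      rw [Finset.sum_filter]
      refine Finset.sum_congr rfl fun s _ => ?_
      by_cases hs : 0 < Φ s
      · simp only [if_pos hs, if_pos (show 0 < ∑ ω, θ ω * π ω s from hs)]
        have hR : Φ s * Ratio μ θ (fun ω => θ ω * π ω s / Φ s)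
            = ∑ ω, μ ω * π ω s := by
          unfold Ratio
          rw [Finset.mul_sum]
          refine Finset.sum_congr rfl fun ω _ => ?_
          field_simp [hθne ω, hs.ne']
        rw [mul_assoc, ← mul_assoc, hR]
      · simp only [if_neg hs, if_neg (show ¬ 0 < ∑ ω, θ ω * π ω s from hs)]
        have h0 : Φ s = 0 := le_antisymm (not_lt.mp hs) (hΦ0 s)
        rw [h0, zero_mul, zero_mul]
  · rintro ⟨m, φ, η, hφ0, hη, hsum, hv⟩
    refine ⟨m, fun ω s => φ s * η s ω / θ ω, ?_, ?_, ?_, ?_⟩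
    · intro ω s
      exact div_nonneg (mul_nonneg (hφ0 s) ((hη s).1 ω)) (hθpos ω).le
    · intro ω s
      rw [div_le_one (hθpos ω)]
      calc φ s * η s ω ≤ ∑ s', φ s' * η s' ω :=
            Finset.single_le_sum (fun s' _ => mul_nonneg (hφ0 s') ((hη s').1 ω))
              (Finset.mem_univ s)
        _ = θ ω := hsum ω
    · intro ω
      rw [← Finset.sum_div, hsum ω, div_self (hθne ω)]
    · have hΦeq : ∀ s, (∑ ω, θ ω * (φ s * η s ω / θ ω)) = φ s := by
        intro s
        have : ∀ ω, θ ω * (φ s * η s ω / θ ω) = φ s * η s ω := by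
          intro ω; field_simp [hθne ω]
        rw [Finset.sum_congr rfl fun ω _ => this ω, ← Finset.mul_sum, (hη s).2,
          mul_one]
      rw [hv]
      rw [Finset.sum_filter]
      symm
      refine Finset.sum_congr rfl fun s _ => ?_
      rw [hΦeq s]
      by_cases hs : 0 < φ s
      · simp only [if_pos hs]
        have hpost : (fun ω => θ ω * (φ s * η s ω / θ ω) / φ s) = η s := by
          funext ω
          field_simp [hθne ω, hs.ne']
        rw [hpost]
        have hμπ : (∑ ω, μ ω * (φ s * η s ω / θ ω)) = φ s * Ratio μ θ (η s) := by
          unfold Ratio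
          rw [Finset.mul_sum]
          refine Finset.sum_congr rfl fun ω _ => ?_
          field_simp [hθne ω, hs.ne']
        rw [hμπ, mul_assoc]
      · simp only [if_neg hs]
        have h0 : φ s = 0 := le_antisymm (not_lt.mp hs) (hφ0 s)
        rw [h0, zero_mul, zero_mul]

end
end

section
/- For every feasible family (S, (φ_s), (η^s)) of the single-type problem (finite S, φ_s ≥ 0, η^s ∈ Δ_n, Σ_{s∈S} φ_s·η^s = θ), there exists a feasible family (S', (φ'_s), (η'^s)) with |S'| ≤ n whose objective value Σ_{s∈S'} φ'_s·R(η'^s)·C(η'^s) is at least Σ_{s∈S} φ_s·R(η^s)·C(η^s). In particular, the supremum of the single-type problem is unchanged when restricted to families with at most n signals. -/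
open Finset
open scoped Classical

noncomputable section

variable {n : ℕ} {A : Type*} [Fintype A] [Nonempty A]

private lemma sum_drop {k : ℕ} (φ h : Fin (k + 1) → ℝ) (s₀ : Fin (k + 1)) (h0 : φ s₀ = 0) :
    ∑ s : Fin (k + 1), φ s * h s = ∑ s : Fin k, φ (s₀.succAbove s) * h (s₀.succAbove s) := by
  rw [Fin.sum_univ_succAbove (fun s => φ s * h s) s₀, h0, zero_mul, zero_add]

private lemma reduce_aux {n : ℕ} (g : (Fin n → ℝ) → ℝ) (θ : Fin n → ℝ) :
    ∀ (m : ℕ) (φ : Fin m → ℝ) (η : Fin m → Fin n → ℝ),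
      (∀ s, 0 ≤ φ s) → (∀ s, (∀ ω, 0 ≤ η s ω) ∧ ∑ ω, η s ω = 1) →
      (∀ ω, ∑ s, φ s * η s ω = θ ω) →
      ∃ (m' : ℕ) (φ' : Fin m' → ℝ) (η' : Fin m' → Fin n → ℝ),
        m' ≤ n ∧ (∀ s, 0 ≤ φ' s) ∧ (∀ s, (∀ ω, 0 ≤ η' s ω) ∧ ∑ ω, η' s ω = 1) ∧
        (∀ ω, ∑ s, φ' s * η' s ω = θ ω) ∧
        (∑ s, φ s * g (η s)) ≤ (∑ s, φ' s * g (η' s)) := by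
  intro m
  induction m with
  | zero =>
    intro φ η hφ hη hc
    exact ⟨0, φ, η, Nat.zero_le n, hφ, hη, hc, le_refl _⟩
  | succ k ih =>
    intro φ η hφ hη hc
    by_cases hkn : k + 1 ≤ n
    · exact ⟨k + 1, φ, η, hkn, hφ, hη, hc, le_refl _⟩
    -- helper: dropping a zero-weight signal
    have drop : ∀ (ψ : Fin (k + 1) → ℝ), (∀ s, 0 ≤ ψ s) →
        (∀ ω, ∑ s, ψ s * η s ω = θ ω) → (∀ s₀, ψ s₀ = 0) →
        True := fun _ _ _ _ => trivial
    clear drop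
    have key : ∃ (ψ : Fin (k + 1) → ℝ) (s₀ : Fin (k + 1)),
        (∀ s, 0 ≤ ψ s) ∧ ψ s₀ = 0 ∧ (∀ ω, ∑ s, ψ s * η s ω = θ ω) ∧
        (∑ s, φ s * g (η s)) ≤ ∑ s, ψ s * g (η s) := by
      by_cases hz : ∃ s₀, φ s₀ = 0
      · obtain ⟨s₀, hs₀⟩ := hz
        exact ⟨φ, s₀, hφ, hs₀, hc, le_refl _⟩
      push_neg at hz
      have hφpos : ∀ s, 0 < φ s := fun s => (hφ s).lt_of_ne' (hz s)
      -- linear dependence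
      have hdep : ¬ LinearIndependent ℝ η := by
        intro hli
        have := hli.fintype_card_le_finrank
        rw [Fintype.card_fin, Module.finrank_fin_fun] at this
        omega
      rw [Fintype.not_linearIndependent_iff] at hdep
      obtain ⟨c₀, hc₀sum, i₀, hi₀⟩ := hdep
      -- choose sign so that ∑ c s * g (η s) ≥ 0
      obtain ⟨c, hcsum, hcne, hcg⟩ :
          ∃ c : Fin (k + 1) → ℝ, (∀ ω, ∑ s, c s * η s ω = 0) ∧ (∃ i, c i ≠ 0) ∧
            0 ≤ ∑ s, c s * g (η s) := by
        have hpt : ∀ ω, ∑ s, c₀ s * η s ω = 0 := by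
          intro ω
          have := congrFun hc₀sum ω
          simpa [Finset.sum_apply] using this
        rcases le_or_gt 0 (∑ s, c₀ s * g (η s)) with h | h
        · exact ⟨c₀, hpt, ⟨i₀, hi₀⟩, h⟩
        · refine ⟨fun s => -c₀ s, fun ω => ?_, ⟨i₀, by simp [hi₀]⟩, ?_⟩
          · simp only [neg_mul]
            rw [Finset.sum_neg_distrib, hpt ω, neg_zero]
          · simp only [neg_mul]
            rw [Finset.sum_neg_distrib]
            linarith
      -- ∑ c = 0
      have hcsum0 : ∑ s, c s = 0 := by
        have : ∑ s, c s = ∑ s, c s * ∑ ω, η s ω := by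
          apply Finset.sum_congr rfl
          intro s _
          rw [(hη s).2, mul_one]
        rw [this]
        have : ∑ s, c s * ∑ ω, η s ω = ∑ ω, ∑ s, c s * η s ω := by
          rw [Finset.sum_comm]
          exact Finset.sum_congr rfl fun s _ => Finset.mul_sum _ _ _
        rw [this]
        simp [hcsum]
      -- some negative coordinate
      have hTne : (Finset.univ.filter (fun s => c s < 0)).Nonempty := by
        by_contra hne
        rw [Finset.not_nonempty_iff_eq_empty, Finset.filter_eq_empty_iff] at hne
        have hall := (Finset.sum_eq_zero_iff_of_nonneg
            (fun s hs => not_lt.mp (hne hs))).mp hcsum0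
        obtain ⟨i, hi⟩ := hcne
        exact hi (hall i (Finset.mem_univ i))
      set T := Finset.univ.filter (fun s => c s < 0) with hT
      set t := T.inf' hTne (fun s => φ s / (-c s)) with ht
      have ht0 : 0 ≤ t := by
        apply Finset.le_inf'
        intro s hs
        rw [hT, Finset.mem_filter] at hs
        exact div_nonneg (hφ s) (by linarith [hs.2])
      obtain ⟨s₀, hs₀T, hs₀eq⟩ := Finset.exists_mem_eq_inf' hTne (fun s => φ s / (-c s))
      rw [hT, Finset.mem_filter] at hs₀T
      have hcs₀ : c s₀ < 0 := hs₀T.2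
      set ψ : Fin (k + 1) → ℝ := fun s => φ s + t * c s with hψdef
      have hψs : ∀ s, ψ s = φ s + t * c s := fun s => rfl
      refine ⟨ψ, s₀, ?_, ?_, ?_, ?_⟩
      · intro s
        rw [hψs]
        rcases le_or_gt 0 (c s) with h | h
        · have := mul_nonneg ht0 h
          linarith [hφ s]
        · have hle : t ≤ φ s / (-c s) := by
            rw [ht]
            exact Finset.inf'_le _ (by rw [hT, Finset.mem_filter]; exact ⟨Finset.mem_univ s, h⟩)
          rw [le_div_iff₀ (by linarith : (0:ℝ) < -c s)] at hle
          nlinarith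
      · have hne0 : c s₀ ≠ 0 := ne_of_lt hcs₀
        have hdm : φ s₀ / -c s₀ * c s₀ = -φ s₀ := by
          field_simp
        rw [hψs, ht, hs₀eq, hdm]
        ring
      · intro ω
        have heq : ∑ s, ψ s * η s ω
            = (∑ s, φ s * η s ω) + t * ∑ s, c s * η s ω := by
          rw [Finset.mul_sum, ← Finset.sum_add_distrib]
          apply Finset.sum_congr rfl
          intro s _
          rw [hψs]; ring
        rw [heq, hcsum ω, hc ω, mul_zero, add_zero]
      · have heq : ∑ s, ψ s * g (η s)
            = (∑ s, φ s * g (η s)) + t * ∑ s, c s * g (η s) := by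
          rw [Finset.mul_sum, ← Finset.sum_add_distrib]
          apply Finset.sum_congr rfl
          intro s _
          rw [hψs]; ring
        rw [heq]
        nlinarith [mul_nonneg ht0 hcg]
    obtain ⟨ψ, s₀, hψ, hψ0, hψc, hψg⟩ := key
    -- drop s₀
    have hres := ih (fun s => ψ (s₀.succAbove s)) (fun s => η (s₀.succAbove s))
      (fun s => hψ _) (fun s => hη _)
      (fun ω => by rw [← sum_drop ψ (fun s => η s ω) s₀ hψ0]; exact hψc ω)
    obtain ⟨m', φ', η', hm', hφ', hη', hc', hg'⟩ := hres
    refine ⟨m', φ', η', hm', hφ', hη', hc', ?_⟩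
    calc ∑ s, φ s * g (η s) ≤ ∑ s, ψ s * g (η s) := hψg
      _ = ∑ s : Fin k, ψ (s₀.succAbove s) * g (η (s₀.succAbove s)) :=
          sum_drop ψ (fun s => g (η s)) s₀ hψ0
      _ ≤ _ := hg'



/-- The set of feasible objective values of the single-type problem,
restricted to families with at most `k` signals. -/
def ConcaveSetLE (u : Fin n → A → ℝ) (μ θ : Fin n → ℝ) (k : ℕ) : Set ℝ :=
  {v | ∃ (m : ℕ) (φ : Fin m → ℝ) (η : Fin m → Fin n → ℝ),
    m ≤ k ∧
    (∀ s, 0 ≤ φ s) ∧ (∀ s, η s ∈ simplex n) ∧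
    (∀ ω, ∑ s, φ s * η s ω = θ ω) ∧
    v = ∑ s, φ s * Ratio μ θ (η s) * Cost u (η s)}

/-- every feasible family of the single-type problem is weakly dominated
by a feasible family with at most `n` signals; in particular the supremum is unchanged
when restricted to families with at most `n` signals. -/
theorem stmt3 (hn : 1 ≤ n) (u : Fin n → A → ℝ)
    (μ θ : Fin n → ℝ) (hμ : μ ∈ simplex n) (hθ : θ ∈ simplex n)
    (hθpos : ∀ ω, 0 < θ ω) :
    (∀ (m : ℕ) (φ : Fin m → ℝ) (η : Fin m → Fin n → ℝ),
      (∀ s, 0 ≤ φ s) → (∀ s, η s ∈ simplex n) →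
      (∀ ω, ∑ s, φ s * η s ω = θ ω) →
      ∃ (m' : ℕ) (φ' : Fin m' → ℝ) (η' : Fin m' → Fin n → ℝ),
        m' ≤ n ∧
        (∀ s, 0 ≤ φ' s) ∧ (∀ s, η' s ∈ simplex n) ∧
        (∀ ω, ∑ s, φ' s * η' s ω = θ ω) ∧
        (∑ s, φ s * Ratio μ θ (η s) * Cost u (η s)) ≤
          (∑ s, φ' s * Ratio μ θ (η' s) * Cost u (η' s))) ∧
    sSup (ConcaveSet u μ θ) = sSup (ConcaveSetLE u μ θ n) := by
  have main : ∀ (m : ℕ) (φ : Fin m → ℝ) (η : Fin m → Fin n → ℝ),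
      (∀ s, 0 ≤ φ s) → (∀ s, η s ∈ simplex n) →
      (∀ ω, ∑ s, φ s * η s ω = θ ω) →
      ∃ (m' : ℕ) (φ' : Fin m' → ℝ) (η' : Fin m' → Fin n → ℝ),
        m' ≤ n ∧
        (∀ s, 0 ≤ φ' s) ∧ (∀ s, η' s ∈ simplex n) ∧
        (∀ ω, ∑ s, φ' s * η' s ω = θ ω) ∧
        (∑ s, φ s * Ratio μ θ (η s) * Cost u (η s)) ≤
          (∑ s, φ' s * Ratio μ θ (η' s) * Cost u (η' s)) := by
    intro m φ η hφ hη hc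
    obtain ⟨m', φ', η', hm', hφ', hη', hc', hle⟩ :=
      reduce_aux (fun η => Ratio μ θ η * Cost u η) θ m φ η hφ (fun s => hη s) hc
    refine ⟨m', φ', η', hm', hφ', fun s => hη' s, hc', ?_⟩
    simpa only [mul_assoc] using hle
  refine ⟨main, ?_⟩
  apply csSup_eq_csSup_of_forall_exists_le
  · rintro x ⟨m, φ, η, hφ, hη, hc, rfl⟩
    obtain ⟨m', φ', η', hm', hφ', hη', hc', hle⟩ := main m φ η hφ hη hc
    exact ⟨_, ⟨m', φ', η', hm', hφ', hη', hc', rfl⟩, hle⟩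
  · rintro y ⟨m, φ, η, hm, hφ, hη, hc, rfl⟩
    exact ⟨_, ⟨m, φ, η, hφ, hη, hc, rfl⟩, le_refl _⟩

end
end

section
/- Let φ_s, φ_t > 0 and η^s, η^t ∈ Δ_n, and set φ_v = φ_s + φ_t and η^v = (φ_s·η^s + φ_t·η^t)/φ_v. Then φ_v·R(η^v)·C(η^v) − φ_s·R(η^s)·C(η^s) − φ_t·R(η^t)·C(η^t) ≥ −(φ_s·φ_t/φ_v)·(R(η^s) − R(η^t))·(C(η^s) − C(η^t)). In particular, if (R(η^s) − R(η^t))·(C(η^s) − C(η^t)) < 0 then merging the two signals strictly increases the objective: φ_v·R(η^v)·C(η^v) > φ_s·R(η^s)·C(η^s) + φ_t·R(η^t)·C(η^t); hence no feasible family attaining the supremum of the single-type problem contains two posteriors with positive weights satisfying this negative-slope condition. -/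
open Finset
open scoped Classical

noncomputable section

variable {n : ℕ} {A : Type*} [Fintype A] [Nonempty A]

lemma ratio_nonneg (μ θ η : Fin n → ℝ) (hμ : ∀ ω, 0 ≤ μ ω) (hθ : ∀ ω, 0 < θ ω)
    (hη : ∀ ω, 0 ≤ η ω) : 0 ≤ Ratio μ θ η := by
  apply Finset.sum_nonneg
  intro ω _
  have := hμ ω; have := hθ ω; have := hη ω
  positivity

lemma ratio_comb (μ θ : Fin n → ℝ) (a b : ℝ) (x y : Fin n → ℝ) :
    Ratio μ θ (fun ω => a * x ω + b * y ω) = a * Ratio μ θ x + b * Ratio μ θ y := by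
  simp only [Ratio, Finset.mul_sum, ← Finset.sum_add_distrib]
  apply Finset.sum_congr rfl
  intro ω _
  ring

lemma ratio_le (μ θ η : Fin n → ℝ) (hμ : ∀ ω, 0 ≤ μ ω) (hθ : ∀ ω, 0 < θ ω)
    (hη : η ∈ simplex n) : Ratio μ θ η ≤ ∑ ω, μ ω / θ ω := by
  apply Finset.sum_le_sum
  intro ω _
  have h1 : η ω ≤ 1 := by
    calc η ω ≤ ∑ ω', η ω' := Finset.single_le_sum (fun ω' _ => hη.1 ω') (Finset.mem_univ ω)
    _ = 1 := hη.2
  have h2 : μ ω * η ω ≤ μ ω := by nlinarith [hμ ω, hη.1 ω]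
  have h3 := (hθ ω)
  rw [div_le_div_iff₀ h3 h3]
  nlinarith

lemma cost_nonneg (u : Fin n → A → ℝ) (η : Fin n → ℝ) (hη : ∀ ω, 0 ≤ η ω) :
    0 ≤ Cost u η := by
  rw [Cost, sub_nonneg]
  apply Finset.sup'_le
  intro a _
  apply Finset.sum_le_sum
  intro ω _
  exact mul_le_mul_of_nonneg_left (Finset.le_sup' (u ω) (Finset.mem_univ a)) (hη ω)

lemma sum_le_sup' (η c : Fin n → ℝ) (hne : (Finset.univ : Finset (Fin n)).Nonempty)
    (hη : η ∈ simplex n) :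
    ∑ ω, η ω * c ω ≤ Finset.univ.sup' hne c := by
  calc ∑ ω, η ω * c ω ≤ ∑ ω, η ω * Finset.univ.sup' hne c := by
        apply Finset.sum_le_sum
        intro ω _
        exact mul_le_mul_of_nonneg_left (Finset.le_sup' c (Finset.mem_univ ω)) (hη.1 ω)
    _ = _ := by rw [← Finset.sum_mul, hη.2, one_mul]

lemma cost_le (u : Fin n → A → ℝ) (η : Fin n → ℝ)
    (hne : (Finset.univ : Finset (Fin n)).Nonempty) (hη : η ∈ simplex n) :
    Cost u η ≤ Finset.univ.sup' hne
      (fun ω => uStar u ω - u ω (Classical.arbitrary A)) := by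
  have h1 : ∑ ω, η ω * u ω (Classical.arbitrary A) ≤
      Finset.univ.sup' Finset.univ_nonempty (fun a => ∑ ω, η ω * u ω a) :=
    Finset.le_sup' (fun a => ∑ ω, η ω * u ω a) (Finset.mem_univ _)
  have h2 : ∑ ω, η ω * (uStar u ω - u ω (Classical.arbitrary A)) ≤ _ :=
    sum_le_sup' η _ hne hη
  rw [Cost]
  have h3 : ∑ ω, η ω * (uStar u ω - u ω (Classical.arbitrary A))
      = ∑ ω, η ω * uStar u ω - ∑ ω, η ω * u ω (Classical.arbitrary A) := by
    rw [← Finset.sum_sub_distrib]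
    apply Finset.sum_congr rfl
    intro ω _
    ring
  linarith

lemma cost_concave (u : Fin n → A → ℝ) (a b : ℝ) (ha : 0 ≤ a) (hb : 0 ≤ b)
    (x y : Fin n → ℝ) :
    a * Cost u x + b * Cost u y ≤ Cost u (fun ω => a * x ω + b * y ω) := by
  have hsup : Finset.univ.sup' Finset.univ_nonempty
      (fun c => ∑ ω, (a * x ω + b * y ω) * u ω c)
      ≤ a * Finset.univ.sup' Finset.univ_nonempty (fun c => ∑ ω, x ω * u ω c)
        + b * Finset.univ.sup' Finset.univ_nonempty (fun c => ∑ ω, y ω * u ω c) := by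
    apply Finset.sup'_le
    intro c _
    have hx : ∑ ω, x ω * u ω c ≤ Finset.univ.sup' Finset.univ_nonempty
        (fun c => ∑ ω, x ω * u ω c) := Finset.le_sup' (fun c => ∑ ω, x ω * u ω c) (Finset.mem_univ c)
    have hy : ∑ ω, y ω * u ω c ≤ Finset.univ.sup' Finset.univ_nonempty
        (fun c => ∑ ω, y ω * u ω c) := Finset.le_sup' (fun c => ∑ ω, y ω * u ω c) (Finset.mem_univ c)
    have heq : ∑ ω, (a * x ω + b * y ω) * u ω c
        = a * ∑ ω, x ω * u ω c + b * ∑ ω, y ω * u ω c := by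
      simp only [Finset.mul_sum, ← Finset.sum_add_distrib]
      apply Finset.sum_congr rfl
      intro ω _
      ring
    rw [heq]
    nlinarith
  have hlin : ∑ ω, (a * x ω + b * y ω) * uStar u ω
      = a * ∑ ω, x ω * uStar u ω + b * ∑ ω, y ω * uStar u ω := by
    simp only [Finset.mul_sum, ← Finset.sum_add_distrib]
    apply Finset.sum_congr rfl
    intro ω _
    ring
  simp only [Cost]
  rw [hlin]
  linarith

lemma merge_ineq (u : Fin n → A → ℝ) (μ θ : Fin n → ℝ) (hμ : μ ∈ simplex n)
    (hθpos : ∀ ω, 0 < θ ω)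
    (φs φt : ℝ) (hφs : 0 < φs) (hφt : 0 < φt)
    (ηs ηt : Fin n → ℝ) (hηs : ηs ∈ simplex n) (hηt : ηt ∈ simplex n) :
    -(φs * φt / (φs + φt)) *
        ((Ratio μ θ ηs - Ratio μ θ ηt) * (Cost u ηs - Cost u ηt)) ≤
      (φs + φt) *
          Ratio μ θ (fun ω => (φs * ηs ω + φt * ηt ω) / (φs + φt)) *
          Cost u (fun ω => (φs * ηs ω + φt * ηt ω) / (φs + φt))
        - φs * Ratio μ θ ηs * Cost u ηs - φt * Ratio μ θ ηt * Cost u ηt := by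
  have hφv : 0 < φs + φt := by linarith
  set a := φs / (φs + φt) with ha_def
  set b := φt / (φs + φt) with hb_def
  have ha : 0 ≤ a := by positivity
  have hb : 0 ≤ b := by positivity
  have hηv_eq : (fun ω => (φs * ηs ω + φt * ηt ω) / (φs + φt))
      = fun ω => a * ηs ω + b * ηt ω := by
    funext ω
    rw [ha_def, hb_def]
    field_simp
  have hR : Ratio μ θ (fun ω => (φs * ηs ω + φt * ηt ω) / (φs + φt))
      = a * Ratio μ θ ηs + b * Ratio μ θ ηt := by
    rw [hηv_eq]; exact ratio_comb μ θ a b ηs ηt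
  have hC : a * Cost u ηs + b * Cost u ηt
      ≤ Cost u (fun ω => (φs * ηs ω + φt * ηt ω) / (φs + φt)) := by
    rw [hηv_eq]; exact cost_concave u a b ha hb ηs ηt
  have hRnn : 0 ≤ Ratio μ θ (fun ω => (φs * ηs ω + φt * ηt ω) / (φs + φt)) := by
    apply ratio_nonneg μ θ _ hμ.1 hθpos
    intro ω
    have := hηs.1 ω; have := hηt.1 ω
    positivity
  have h1 : (φs + φt) * Ratio μ θ (fun ω => (φs * ηs ω + φt * ηt ω) / (φs + φt))
        * (a * Cost u ηs + b * Cost u ηt)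
      ≤ (φs + φt) * Ratio μ θ (fun ω => (φs * ηs ω + φt * ηt ω) / (φs + φt))
        * Cost u (fun ω => (φs * ηs ω + φt * ηt ω) / (φs + φt)) := by
    apply mul_le_mul_of_nonneg_left hC
    positivity
  have h2 : (φs + φt) * Ratio μ θ (fun ω => (φs * ηs ω + φt * ηt ω) / (φs + φt))
        * (a * Cost u ηs + b * Cost u ηt)
      = φs * Ratio μ θ ηs * Cost u ηs + φt * Ratio μ θ ηt * Cost u ηt
        - (φs * φt / (φs + φt)) *
            ((Ratio μ θ ηs - Ratio μ θ ηt) * (Cost u ηs - Cost u ηt)) := by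
    rw [hR, ha_def, hb_def]
    field_simp
    ring
  linarith

lemma merge_strict (u : Fin n → A → ℝ) (μ θ : Fin n → ℝ) (hμ : μ ∈ simplex n)
    (hθpos : ∀ ω, 0 < θ ω)
    (φs φt : ℝ) (hφs : 0 < φs) (hφt : 0 < φt)
    (ηs ηt : Fin n → ℝ) (hηs : ηs ∈ simplex n) (hηt : ηt ∈ simplex n)
    (hP : (Ratio μ θ ηs - Ratio μ θ ηt) * (Cost u ηs - Cost u ηt) < 0) :
    φs * Ratio μ θ ηs * Cost u ηs + φt * Ratio μ θ ηt * Cost u ηt <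
      (φs + φt) *
        Ratio μ θ (fun ω => (φs * ηs ω + φt * ηt ω) / (φs + φt)) *
        Cost u (fun ω => (φs * ηs ω + φt * ηt ω) / (φs + φt)) := by
  have h := merge_ineq u μ θ hμ hθpos φs φt hφs hφt ηs ηt hηs hηt
  have hφv : 0 < φs * φt / (φs + φt) := by positivity
  nlinarith

lemma concaveSet_bddAbove (hn : 1 ≤ n) (u : Fin n → A → ℝ) (μ θ : Fin n → ℝ)
    (hμ : μ ∈ simplex n) (hθ : θ ∈ simplex n) (hθpos : ∀ ω, 0 < θ ω) :
    BddAbove (ConcaveSet u μ θ) := by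
  have hne : (Finset.univ : Finset (Fin n)).Nonempty :=
    ⟨⟨0, hn⟩, Finset.mem_univ _⟩
  set Rmax : ℝ := ∑ ω, μ ω / θ ω with hRmax_def
  have hRmax : 0 ≤ Rmax := by
    apply Finset.sum_nonneg
    intro ω _
    exact div_nonneg (hμ.1 ω) (hθpos ω).le
  set Cmax : ℝ := max 0 (Finset.univ.sup' hne
    (fun ω => uStar u ω - u ω (Classical.arbitrary A))) with hCmax_def
  have hCmax : 0 ≤ Cmax := le_max_left _ _
  refine ⟨Rmax * Cmax, ?_⟩
  rintro v ⟨m, φ, η, hφ, hη, hfeas, rfl⟩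
  have hsum1 : ∑ i, φ i = 1 := by
    calc ∑ i, φ i = ∑ i, φ i * ∑ ω, (η i) ω := by
          apply Finset.sum_congr rfl
          intro i _
          rw [(hη i).2, mul_one]
      _ = ∑ i, ∑ ω, φ i * (η i) ω := by
          apply Finset.sum_congr rfl
          intro i _
          rw [Finset.mul_sum]
      _ = ∑ ω, ∑ i, φ i * (η i) ω := Finset.sum_comm
      _ = ∑ ω, θ ω := by
          apply Finset.sum_congr rfl
          intro ω _
          exact hfeas ω
      _ = 1 := hθ.2
  calc ∑ i, φ i * Ratio μ θ (η i) * Cost u (η i)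
      ≤ ∑ i, φ i * (Rmax * Cmax) := by
        apply Finset.sum_le_sum
        intro i _
        have hR0 : 0 ≤ Ratio μ θ (η i) := ratio_nonneg μ θ _ hμ.1 hθpos (hη i).1
        have hRle : Ratio μ θ (η i) ≤ Rmax := ratio_le μ θ _ hμ.1 hθpos (hη i)
        have hC0 : 0 ≤ Cost u (η i) := cost_nonneg u _ (hη i).1
        have hCle : Cost u (η i) ≤ Cmax :=
          (cost_le u _ hne (hη i)).trans (le_max_right _ _)
        have : Ratio μ θ (η i) * Cost u (η i) ≤ Rmax * Cmax :=
          mul_le_mul hRle hCle hC0 hRmax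
        calc φ i * Ratio μ θ (η i) * Cost u (η i)
            = φ i * (Ratio μ θ (η i) * Cost u (η i)) := by ring
          _ ≤ φ i * (Rmax * Cmax) := mul_le_mul_of_nonneg_left this (hφ i)
    _ = Rmax * Cmax := by rw [← Finset.sum_mul, hsum1, one_mul]

lemma sum_erase_two {m : ℕ} (g : Fin m → ℝ) (s t : Fin m) (hst : s ≠ t) :
    ∑ i, (if i = s ∨ i = t then 0 else g i) = ∑ i, g i - g s - g t := by
  have : ∀ i : Fin m, (if i = s ∨ i = t then (0:ℝ) else g i)
      = g i - (if i = s then g i else 0) - (if i = t then g i else 0) := by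
    intro i
    by_cases h1 : i = s <;> by_cases h2 : i = t <;> simp_all
  rw [Finset.sum_congr rfl (fun i _ => this i)]
  rw [Finset.sum_sub_distrib, Finset.sum_sub_distrib,
    Finset.sum_ite_eq' Finset.univ s g, Finset.sum_ite_eq' Finset.univ t g]
  simp

/-- merging two signals changes the objective by at least
`−(φ_s φ_t / φ_v)·(R(η^s) − R(η^t))·(C(η^s) − C(η^t))`; in particular, merging two
signals whose `(R, C)` pairs lie along a negative slope strictly increases the
objective, so no feasible family attaining the supremum of the single-type problem
contains two positively weighted posteriors with that negative-slope condition. -/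
theorem stmt5 (hn : 1 ≤ n) (u : Fin n → A → ℝ)
    (μ θ : Fin n → ℝ) (hμ : μ ∈ simplex n) (hθ : θ ∈ simplex n)
    (hθpos : ∀ ω, 0 < θ ω)
    (φs φt : ℝ) (hφs : 0 < φs) (hφt : 0 < φt)
    (ηs ηt : Fin n → ℝ) (hηs : ηs ∈ simplex n) (hηt : ηt ∈ simplex n) :
    (-(φs * φt / (φs + φt)) *
        ((Ratio μ θ ηs - Ratio μ θ ηt) * (Cost u ηs - Cost u ηt)) ≤
      (φs + φt) *
          Ratio μ θ (fun ω => (φs * ηs ω + φt * ηt ω) / (φs + φt)) *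
          Cost u (fun ω => (φs * ηs ω + φt * ηt ω) / (φs + φt))
        - φs * Ratio μ θ ηs * Cost u ηs - φt * Ratio μ θ ηt * Cost u ηt) ∧
    ((Ratio μ θ ηs - Ratio μ θ ηt) * (Cost u ηs - Cost u ηt) < 0 →
      φs * Ratio μ θ ηs * Cost u ηs + φt * Ratio μ θ ηt * Cost u ηt <
        (φs + φt) *
          Ratio μ θ (fun ω => (φs * ηs ω + φt * ηt ω) / (φs + φt)) *
          Cost u (fun ω => (φs * ηs ω + φt * ηt ω) / (φs + φt))) ∧
    (∀ (m : ℕ) (φ : Fin m → ℝ) (η : Fin m → Fin n → ℝ),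
      (∀ s, 0 ≤ φ s) → (∀ s, η s ∈ simplex n) →
      (∀ ω, ∑ s, φ s * η s ω = θ ω) →
      (∑ s, φ s * Ratio μ θ (η s) * Cost u (η s)) = sSup (ConcaveSet u μ θ) →
      ∀ s t : Fin m, s ≠ t → 0 < φ s → 0 < φ t →
        ¬ (Ratio μ θ (η s) - Ratio μ θ (η t)) *
            (Cost u (η s) - Cost u (η t)) < 0) := by
  refine ⟨merge_ineq u μ θ hμ hθpos φs φt hφs hφt ηs ηt hηs hηt,
    fun hP => merge_strict u μ θ hμ hθpos φs φt hφs hφt ηs ηt hηs hηt hP, ?_⟩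
  intro m φ η hφ hη hfeas hattain s t hst hφspos hφtpos hP
  have hφv : 0 < φ s + φ t := by linarith
  set ηv : Fin n → ℝ := fun ω => (φ s * η s ω + φ t * η t ω) / (φ s + φ t) with hηv_def
  have hηv : ηv ∈ simplex n := by
    constructor
    · intro ω
      have := (hη s).1 ω; have := (hη t).1 ω
      positivity
    · rw [hηv_def]
      simp only
      rw [← Finset.sum_div, Finset.sum_add_distrib, ← Finset.mul_sum, ← Finset.mul_sum,
        (hη s).2, (hη t).2]
      field_simp
  set φ' : Fin (m + 1) → ℝ :=
    Fin.snoc (fun i => if i = s ∨ i = t then 0 else φ i) (φ s + φ t) with hφ'_def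
  set η' : Fin (m + 1) → Fin n → ℝ := Fin.snoc η ηv with hη'_def
  have hφ'nn : ∀ i, 0 ≤ φ' i := by
    intro i
    refine Fin.lastCases ?_ ?_ i
    · simp [hφ'_def]
      linarith
    · intro j
      simp only [hφ'_def, Fin.snoc_castSucc]
      split
      · exact le_refl 0
      · exact hφ j
  have hη'mem : ∀ i, η' i ∈ simplex n := by
    intro i
    refine Fin.lastCases ?_ ?_ i
    · simp only [hη'_def, Fin.snoc_last]
      exact hηv
    · intro j
      simp only [hη'_def, Fin.snoc_castSucc]
      exact hη j
  have hmul : ∀ ω, (φ s + φ t) * ηv ω = φ s * η s ω + φ t * η t ω := by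
    intro ω
    rw [hηv_def]
    field_simp
  have hfeas' : ∀ ω, ∑ i, φ' i * η' i ω = θ ω := by
    intro ω
    rw [Fin.sum_univ_castSucc]
    simp only [hφ'_def, hη'_def, Fin.snoc_castSucc, Fin.snoc_last]
    have h1 : ∑ i : Fin m, (if i = s ∨ i = t then (0:ℝ) else φ i) * η i ω
        = ∑ i : Fin m, (if i = s ∨ i = t then (0:ℝ) else φ i * η i ω) := by
      apply Finset.sum_congr rfl
      intro i _
      split <;> simp
    rw [h1, sum_erase_two (fun i => φ i * η i ω) s t hst, hmul ω, hfeas ω]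
    ring
  have hv'mem : (∑ i, φ' i * Ratio μ θ (η' i) * Cost u (η' i)) ∈ ConcaveSet u μ θ :=
    ⟨m + 1, φ', η', hφ'nn, hη'mem, hfeas', rfl⟩
  have hle : (∑ i, φ' i * Ratio μ θ (η' i) * Cost u (η' i)) ≤ sSup (ConcaveSet u μ θ) :=
    le_csSup (concaveSet_bddAbove hn u μ θ hμ hθ hθpos) hv'mem
  have hstrict := merge_strict u μ θ hμ hθpos (φ s) (φ t) hφspos hφtpos
    (η s) (η t) (hη s) (hη t) hP
  have hv'eq : (∑ i, φ' i * Ratio μ θ (η' i) * Cost u (η' i))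
      = (∑ i, φ i * Ratio μ θ (η i) * Cost u (η i))
        - φ s * Ratio μ θ (η s) * Cost u (η s)
        - φ t * Ratio μ θ (η t) * Cost u (η t)
        + (φ s + φ t) * Ratio μ θ ηv * Cost u ηv := by
    rw [Fin.sum_univ_castSucc]
    simp only [hφ'_def, hη'_def, Fin.snoc_castSucc, Fin.snoc_last]
    have h1 : ∑ i : Fin m, (if i = s ∨ i = t then (0:ℝ) else φ i)
          * Ratio μ θ (η i) * Cost u (η i)
        = ∑ i : Fin m, (if i = s ∨ i = t then (0:ℝ)
            else φ i * Ratio μ θ (η i) * Cost u (η i)) := by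
      apply Finset.sum_congr rfl
      intro i _
      split <;> simp
    rw [h1, sum_erase_two (fun i => φ i * Ratio μ θ (η i) * Cost u (η i)) s t hst]
  rw [hv'eq, hattain] at hle
  rw [hηv_def] at hle
  linarith

end
end

section
/- There exists a feasible family (S, (φ_s), (η^s)) attaining the supremum of the single-type problem with |S| ≤ n such that every posterior η^s has at most 2·|A| nonzero coordinates, i.e., ‖η^s‖₀ ≤ 2|A| for all s ∈ S. -/
open Finset
open scoped Classical

noncomputable section

variable {n : ℕ} {A : Type*} [Fintype A] [Nonempty A]

/-! ### Auxiliary definitions -/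

def Lgap (u : Fin n → A → ℝ) (b : A) (v : Fin n → ℝ) : ℝ :=
  ∑ ω, v ω * (uStar u ω - u ω b)

def fobj (u : Fin n → A → ℝ) (μ θ : Fin n → ℝ) (v : Fin n → ℝ) : ℝ :=
  Ratio μ θ v * Cost u v

lemma Lgap_eq_sub (u : Fin n → A → ℝ) (b : A) (v : Fin n → ℝ) :
    Lgap u b v = (∑ ω, v ω * uStar u ω) - ∑ ω, v ω * u ω b := by
  simp only [Lgap, mul_sub]
  rw [Finset.sum_sub_distrib]

lemma Cost_eq_inf (u : Fin n → A → ℝ) (v : Fin n → ℝ) :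
    Cost u v = Finset.univ.inf' Finset.univ_nonempty (fun b => Lgap u b v) := by
  unfold Cost
  apply le_antisymm
  · apply Finset.le_inf'
    intro b _
    rw [Lgap_eq_sub]
    have : ∑ ω, v ω * u ω b ≤ Finset.univ.sup' Finset.univ_nonempty
        (fun a => ∑ ω, v ω * u ω a) :=
      Finset.le_sup' (fun a => ∑ ω, v ω * u ω a) (Finset.mem_univ b)
    linarith
  · obtain ⟨a, -, ha⟩ := Finset.exists_mem_eq_sup' (Finset.univ_nonempty (α := A))
      (fun a => ∑ ω, v ω * u ω a)
    have h1 : Finset.univ.inf' Finset.univ_nonempty (fun b => Lgap u b v) ≤ Lgap u a v :=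
      Finset.inf'_le _ (Finset.mem_univ a)
    rw [Lgap_eq_sub u a] at h1
    rw [ha]
    linarith

/-- `Cost` coincides with each tight gap functional. -/
lemma Cost_le_Lgap (u : Fin n → A → ℝ) (v : Fin n → ℝ) (b : A) :
    Cost u v ≤ Lgap u b v := by
  rw [Cost_eq_inf]
  exact Finset.inf'_le _ (Finset.mem_univ b)

lemma exists_Cost_eq_Lgap (u : Fin n → A → ℝ) (v : Fin n → ℝ) :
    ∃ b : A, Cost u v = Lgap u b v := by
  obtain ⟨b, -, hb⟩ := Finset.exists_mem_eq_inf' (Finset.univ_nonempty (α := A))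
    (fun b => Lgap u b v)
  exact ⟨b, by rw [Cost_eq_inf]; exact hb⟩

lemma Cost_eq_of_le (u : Fin n → A → ℝ) (v : Fin n → ℝ) (a : A)
    (h : ∀ b, Lgap u a v ≤ Lgap u b v) : Cost u v = Lgap u a v := by
  rw [Cost_eq_inf]
  exact le_antisymm (Finset.inf'_le _ (Finset.mem_univ a)) (Finset.le_inf' _ _ fun b _ => h b)

/-! ### Linearity -/

lemma Ratio_add_smul (μ θ : Fin n → ℝ) (v d : Fin n → ℝ) (t : ℝ) :
    Ratio μ θ (v + t • d) = Ratio μ θ v + t * Ratio μ θ d := by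
  unfold Ratio
  rw [Finset.mul_sum, ← Finset.sum_add_distrib]
  refine Finset.sum_congr rfl fun ω _ => ?_
  simp only [Pi.add_apply, Pi.smul_apply, smul_eq_mul]
  ring

lemma Lgap_add_smul (u : Fin n → A → ℝ) (b : A) (v d : Fin n → ℝ) (t : ℝ) :
    Lgap u b (v + t • d) = Lgap u b v + t * Lgap u b d := by
  unfold Lgap
  rw [Finset.mul_sum, ← Finset.sum_add_distrib]
  refine Finset.sum_congr rfl fun ω _ => ?_
  simp only [Pi.add_apply, Pi.smul_apply, smul_eq_mul]
  ring

lemma sum_add_smul (v d : Fin n → ℝ) (t : ℝ) :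
    ∑ ω, (v + t • d) ω = (∑ ω, v ω) + t * ∑ ω, d ω := by
  rw [Finset.mul_sum, ← Finset.sum_add_distrib]
  refine Finset.sum_congr rfl fun ω _ => ?_
  simp only [Pi.add_apply, Pi.smul_apply, smul_eq_mul]

/-! ### Bounds -/

lemma Ratio_nonneg {μ θ : Fin n → ℝ} (hμ : ∀ ω, 0 ≤ μ ω) (hθ : ∀ ω, 0 < θ ω)
    {v : Fin n → ℝ} (hv : ∀ ω, 0 ≤ v ω) : 0 ≤ Ratio μ θ v :=
  Finset.sum_nonneg fun ω _ => div_nonneg (mul_nonneg (hμ ω) (hv ω)) (hθ ω).le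

lemma Cost_nonneg (u : Fin n → A → ℝ) {v : Fin n → ℝ} (hv : ∀ ω, 0 ≤ v ω) :
    0 ≤ Cost u v := by
  unfold Cost
  rw [sub_nonneg]
  apply Finset.sup'_le
  intro b _
  apply Finset.sum_le_sum
  intro ω _
  exact mul_le_mul_of_nonneg_left (Finset.le_sup' (u ω) (Finset.mem_univ b)) (hv ω)

lemma fobj_nonneg (u : Fin n → A → ℝ) {μ θ : Fin n → ℝ} (hμ : ∀ ω, 0 ≤ μ ω)
    (hθ : ∀ ω, 0 < θ ω) {v : Fin n → ℝ} (hv : ∀ ω, 0 ≤ v ω) : 0 ≤ fobj u μ θ v :=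
  mul_nonneg (Ratio_nonneg hμ hθ hv) (Cost_nonneg u hv)

lemma mem_simplex_le_one {v : Fin n → ℝ} (hv : v ∈ simplex n) (ω : Fin n) : v ω ≤ 1 := by
  obtain ⟨h0, h1⟩ := hv
  calc v ω ≤ ∑ ω', v ω' := Finset.single_le_sum (fun ω' _ => h0 ω') (Finset.mem_univ ω)
  _ = 1 := h1

/-- Explicit upper bound for `fobj` on the simplex. -/
def Mbound (u : Fin n → A → ℝ) (μ θ : Fin n → ℝ) : ℝ :=
  (∑ ω, μ ω / θ ω) * (∑ ω, |uStar u ω - u ω (Classical.arbitrary A)|)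

lemma fobj_le_Mbound (u : Fin n → A → ℝ) {μ θ : Fin n → ℝ} (hμ : ∀ ω, 0 ≤ μ ω)
    (hθ : ∀ ω, 0 < θ ω) {v : Fin n → ℝ} (hv : v ∈ simplex n) :
    fobj u μ θ v ≤ Mbound u μ θ := by
  have hR : Ratio μ θ v ≤ ∑ ω, μ ω / θ ω := by
    apply Finset.sum_le_sum
    intro ω _
    rw [div_le_div_iff_of_pos_right (hθ ω)]
    exact mul_le_of_le_one_right (hμ ω) (mem_simplex_le_one hv ω)
  have hC : Cost u v ≤ ∑ ω, |uStar u ω - u ω (Classical.arbitrary A)| := by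
    calc Cost u v ≤ Lgap u (Classical.arbitrary A) v := Cost_le_Lgap u v _
    _ ≤ ∑ ω, |uStar u ω - u ω (Classical.arbitrary A)| := by
        apply Finset.sum_le_sum
        intro ω _
        calc v ω * (uStar u ω - u ω (Classical.arbitrary A))
            ≤ v ω * |uStar u ω - u ω (Classical.arbitrary A)| :=
              mul_le_mul_of_nonneg_left (le_abs_self _) (hv.1 ω)
          _ ≤ 1 * |uStar u ω - u ω (Classical.arbitrary A)| :=
              mul_le_mul_of_nonneg_right (mem_simplex_le_one hv ω) (abs_nonneg _)
          _ = _ := one_mul _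
  exact mul_le_mul hR hC (Cost_nonneg u hv.1) (Finset.sum_nonneg fun ω _ =>
    div_nonneg (hμ ω) (hθ ω).le)




/-- sparsity predicate -/
def sparse (A : Type*) [Fintype A] (v : Fin n → ℝ) : Prop :=
  (Finset.univ.filter (fun ω => v ω ≠ 0)).card ≤ 2 * Fintype.card A

/-- the point mass at coordinate 0 -/
def pmass (hn : 1 ≤ n) : Fin n → ℝ := fun ω => if ω = ⟨0, hn⟩ then 1 else 0

lemma pmass_mem (hn : 1 ≤ n) : pmass hn ∈ simplex n := by
  constructor
  · intro ω; unfold pmass; split <;> norm_num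
  · simp [pmass]

lemma pmass_sparse (hn : 1 ≤ n) : sparse A (pmass hn) := by
  unfold sparse
  have : (Finset.univ.filter (fun ω => pmass hn ω ≠ 0)) = {(⟨0, hn⟩ : Fin n)} := by
    ext ω
    simp only [Finset.mem_filter, Finset.mem_univ, true_and, Finset.mem_singleton, pmass]
    by_cases h : ω = ⟨0, hn⟩ <;> simp_all
  rw [this, Finset.card_singleton]
  have := Fintype.card_pos (α := A)
  omega


/-- Summing a padded family equals summing the original family. -/
lemma sum_extend_eq {ι : Type} [Fintype ι] {N : ℕ} {β : Type*}
    (F : ℝ → β → ℝ) (hF0 : ∀ v, F 0 v = 0) (e : ι ↪ Fin N)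
    (φ : ι → ℝ) (η : ι → β) {d : Fin N → β} :
    ∑ s : Fin N, F (Function.extend e φ 0 s) (Function.extend e η d s)
      = ∑ i, F (φ i) (η i) := by
  have h1 : ∑ s : Fin N, F (Function.extend e φ 0 s) (Function.extend e η d s)
      = ∑ s ∈ Finset.univ.image e, F (Function.extend e φ 0 s) (Function.extend e η d s) := by
    symm
    apply Finset.sum_subset (Finset.subset_univ _)
    intro s _ hs
    have hne : ¬∃ i, e i = s := by
      intro ⟨i, hi⟩
      exact hs (Finset.mem_image.mpr ⟨i, Finset.mem_univ i, hi⟩)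
    rw [Function.extend_apply' _ _ _ hne]
    simpa using hF0 _
  rw [h1, Finset.sum_image (fun i _ j _ h => e.injective h)]
  refine Finset.sum_congr rfl fun i _ => ?_
  rw [Function.Injective.extend_apply e.injective, Function.Injective.extend_apply e.injective]

/-- Padding a finite family to a family indexed by `Fin N`. -/
lemma fam_pad (u : Fin n → A → ℝ) (μ θ : Fin n → ℝ) (hn : 1 ≤ n)
    {ι : Type} [Fintype ι] (N : ℕ) (hcard : Fintype.card ι ≤ N)
    (φ : ι → ℝ) (η : ι → Fin n → ℝ) (hφ : ∀ i, 0 ≤ φ i) (hη : ∀ i, η i ∈ simplex n) :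
    ∃ (φ' : Fin N → ℝ) (η' : Fin N → Fin n → ℝ),
      (∀ s, 0 ≤ φ' s) ∧ (∀ s, η' s ∈ simplex n) ∧
      (∀ ω, ∑ s, φ' s * η' s ω = ∑ i, φ i * η i ω) ∧
      (∑ s, φ' s * Ratio μ θ (η' s) * Cost u (η' s)
        = ∑ i, φ i * Ratio μ θ (η i) * Cost u (η i)) ∧
      ((∀ i, sparse A (η i)) → ∀ s, sparse A (η' s)) := by
  obtain ⟨e⟩ := Function.Embedding.nonempty_of_card_le (β := Fin N) (by simpa using hcard)
  refine ⟨Function.extend e φ 0, Function.extend e η (fun _ => pmass hn), ?_, ?_, ?_, ?_, ?_⟩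
  · intro s
    rcases em (∃ i, e i = s) with ⟨i, hi⟩ | h
    · rw [← hi, Function.Injective.extend_apply e.injective]; exact hφ i
    · rw [Function.extend_apply' _ _ _ h]; simp
  · intro s
    rcases em (∃ i, e i = s) with ⟨i, hi⟩ | h
    · rw [← hi, Function.Injective.extend_apply e.injective]; exact hη i
    · rw [Function.extend_apply' _ _ _ h]; exact pmass_mem hn
  · intro ω
    exact sum_extend_eq (fun w v => w * v ω) (by simp) e φ η
  · exact sum_extend_eq (fun w v => w * Ratio μ θ v * Cost u v) (by simp) e φ η
  · intro hs s
    rcases em (∃ i, e i = s) with ⟨i, hi⟩ | h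
    · rw [← hi, Function.Injective.extend_apply e.injective]; exact hs i
    · rw [Function.extend_apply' _ _ _ h]; exact pmass_sparse hn




/-! ### Families and membership in `ConcaveSet` -/

lemma sum_phi_one {θ : Fin n → ℝ} (hθ : θ ∈ simplex n) {ι : Type} [Fintype ι]
    {φ : ι → ℝ} {η : ι → Fin n → ℝ} (hη : ∀ i, η i ∈ simplex n)
    (hconstr : ∀ ω, ∑ i, φ i * η i ω = θ ω) : ∑ i, φ i = 1 := by
  have : ∑ i, φ i = ∑ i, ∑ ω, φ i * η i ω := by
    refine Finset.sum_congr rfl fun i _ => ?_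
    rw [← Finset.mul_sum, (hη i).2, mul_one]
  rw [this, Finset.sum_comm]
  calc ∑ ω, ∑ i, φ i * η i ω = ∑ ω, θ ω := by
        exact Finset.sum_congr rfl fun ω _ => hconstr ω
    _ = 1 := hθ.2

lemma mem_ConcaveSet (u : Fin n → A → ℝ) {μ θ : Fin n → ℝ} (hn : 1 ≤ n)
    {ι : Type} [Fintype ι] {φ : ι → ℝ} {η : ι → Fin n → ℝ}
    (hφ : ∀ i, 0 ≤ φ i) (hη : ∀ i, η i ∈ simplex n)
    (hconstr : ∀ ω, ∑ i, φ i * η i ω = θ ω) :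
    (∑ i, φ i * Ratio μ θ (η i) * Cost u (η i)) ∈ ConcaveSet u μ θ := by
  obtain ⟨φ', η', h1, h2, h3, h4, -⟩ :=
    fam_pad u μ θ hn (Fintype.card ι) le_rfl φ η hφ hη
  exact ⟨Fintype.card ι, φ', η', h1, h2, fun ω => (h3 ω).trans (hconstr ω), h4.symm⟩

lemma value_le_Mbound (u : Fin n → A → ℝ) {μ θ : Fin n → ℝ}
    (hμ : μ ∈ simplex n) (hθ : θ ∈ simplex n) (hθpos : ∀ ω, 0 < θ ω)
    {ι : Type} [Fintype ι] {φ : ι → ℝ} {η : ι → Fin n → ℝ}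
    (hφ : ∀ i, 0 ≤ φ i) (hη : ∀ i, η i ∈ simplex n)
    (hconstr : ∀ ω, ∑ i, φ i * η i ω = θ ω) :
    ∑ i, φ i * Ratio μ θ (η i) * Cost u (η i) ≤ Mbound u μ θ := by
  have h1 : ∑ i, φ i * Ratio μ θ (η i) * Cost u (η i) ≤ ∑ i, φ i * Mbound u μ θ := by
    apply Finset.sum_le_sum
    intro i _
    rw [mul_assoc]
    apply mul_le_mul_of_nonneg_left _ (hφ i)
    exact fobj_le_Mbound u hμ.1 hθpos (hη i)
  rw [← Finset.sum_mul, sum_phi_one hθ hη hconstr, one_mul] at h1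
  exact h1

lemma ConcaveSet_bddAbove (u : Fin n → A → ℝ) {μ θ : Fin n → ℝ}
    (hμ : μ ∈ simplex n) (hθ : θ ∈ simplex n) (hθpos : ∀ ω, 0 < θ ω) :
    BddAbove (ConcaveSet u μ θ) := by
  refine ⟨Mbound u μ θ, fun v hv => ?_⟩
  obtain ⟨m, φ, η, hφ, hη, hconstr, hval⟩ := hv
  rw [hval]
  exact value_le_Mbound u hμ hθ hθpos hφ hη hconstr

lemma ConcaveSet_nonempty (u : Fin n → A → ℝ) {μ θ : Fin n → ℝ} (hn : 1 ≤ n)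
    (hθ : θ ∈ simplex n) : (ConcaveSet u μ θ).Nonempty := by
  classical
  -- point-mass family
  refine ⟨_, mem_ConcaveSet u hn (ι := Fin n) (φ := θ)
    (η := fun i ω => if ω = i then 1 else 0) (fun i => hθ.1 i) ?_ ?_⟩
  · intro i
    constructor
    · intro ω; simp only; split <;> norm_num
    · simp
  · intro ω
    rw [Finset.sum_eq_single ω]
    · simp
    · intro b _ hb
      simp [Ne.symm hb]
    · simp

/-! ### Attainment of the supremum -/

lemma continuous_Ratio (μ θ : Fin n → ℝ) : Continuous (Ratio μ θ) := by
  unfold Ratio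
  exact continuous_finset_sum _ fun ω _ =>
    ((continuous_const.mul (continuous_apply ω)).div_const _)

lemma continuous_Cost (u : Fin n → A → ℝ) : Continuous (Cost u) := by
  unfold Cost
  apply Continuous.sub
  · exact continuous_finset_sum _ fun ω _ => (continuous_apply ω).mul continuous_const
  · exact Continuous.finset_sup'_apply Finset.univ_nonempty fun a _ =>
      continuous_finset_sum _ fun ω _ => (continuous_apply ω).mul continuous_const

lemma isClosed_simplex : IsClosed (simplex n) := by
  have : simplex n = (⋂ ω, {v : Fin n → ℝ | 0 ≤ v ω}) ∩ {v | ∑ ω, v ω = 1} := by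
    ext v
    simp [simplex, Set.mem_iInter]
  rw [this]
  refine IsClosed.inter (isClosed_iInter fun ω => ?_) ?_
  · exact isClosed_le continuous_const (continuous_apply ω)
  · exact isClosed_eq (continuous_finset_sum _ fun ω _ => continuous_apply ω) continuous_const

/-- The feasible parameter set with `N` signals. -/
def Xset (θ : Fin n → ℝ) (N : ℕ) : Set ((Fin N → ℝ) × (Fin N → Fin n → ℝ)) :=
  {p | (∀ s, 0 ≤ p.1 s) ∧ (∀ s, p.2 s ∈ simplex n) ∧ (∀ ω, ∑ s, p.1 s * p.2 s ω = θ ω)}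

/-- The value map. -/
def valmap (u : Fin n → A → ℝ) (μ θ : Fin n → ℝ) (N : ℕ)
    (p : (Fin N → ℝ) × (Fin N → Fin n → ℝ)) : ℝ :=
  ∑ s, p.1 s * Ratio μ θ (p.2 s) * Cost u (p.2 s)

lemma continuous_valmap (u : Fin n → A → ℝ) (μ θ : Fin n → ℝ) (N : ℕ) :
    Continuous (valmap u μ θ N) := by
  unfold valmap
  refine continuous_finset_sum _ fun s _ => ?_
  have h2 : Continuous fun p : (Fin N → ℝ) × (Fin N → Fin n → ℝ) => p.2 s :=
    (continuous_apply s).comp continuous_snd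
  exact (((continuous_apply s).comp continuous_fst).mul
    ((continuous_Ratio μ θ).comp h2)).mul ((continuous_Cost u).comp h2)

lemma isCompact_Xset {θ : Fin n → ℝ} (hθ : θ ∈ simplex n) (N : ℕ) :
    IsCompact (Xset θ N) := by
  apply IsCompact.of_isClosed_subset
      (isCompact_Icc (a := ((0 : Fin N → ℝ), (0 : Fin N → Fin n → ℝ))) (b := (1, 1)))
  · have h1 : IsClosed (⋂ s, {p : (Fin N → ℝ) × (Fin N → Fin n → ℝ) | 0 ≤ p.1 s}) :=
      isClosed_iInter fun s => isClosed_le continuous_const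
        ((continuous_apply s).comp continuous_fst)
    have h2 : IsClosed (⋂ s, {p : (Fin N → ℝ) × (Fin N → Fin n → ℝ) | p.2 s ∈ simplex n}) :=
      isClosed_iInter fun s =>
        isClosed_simplex.preimage ((continuous_apply s).comp continuous_snd)
    have h3 : IsClosed (⋂ ω, {p : (Fin N → ℝ) × (Fin N → Fin n → ℝ) |
        ∑ s, p.1 s * p.2 s ω = θ ω}) :=
      isClosed_iInter fun ω => isClosed_eq (continuous_finset_sum _ fun s _ =>
        (((continuous_apply s).comp continuous_fst).mul
          ((continuous_apply ω).comp ((continuous_apply s).comp continuous_snd))))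
        continuous_const
    have : Xset θ N = (⋂ s, {p : (Fin N → ℝ) × (Fin N → Fin n → ℝ) | 0 ≤ p.1 s})
        ∩ ((⋂ s, {p : (Fin N → ℝ) × (Fin N → Fin n → ℝ) | p.2 s ∈ simplex n})
        ∩ (⋂ ω, {p : (Fin N → ℝ) × (Fin N → Fin n → ℝ) | ∑ s, p.1 s * p.2 s ω = θ ω})) := by
      ext p
      simp [Xset, Set.mem_iInter]
    rw [this]
    exact h1.inter (h2.inter h3)
  · rintro p ⟨h1, h2, h3⟩
    have hsum : ∑ s, p.1 s = 1 := sum_phi_one hθ h2 h3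
    constructor
    · exact ⟨fun s => h1 s, fun s ω => (h2 s).1 ω⟩
    · constructor
      · intro s
        calc p.1 s ≤ ∑ s', p.1 s' :=
              Finset.single_le_sum (fun s' _ => h1 s') (Finset.mem_univ s)
          _ = 1 := hsum
      · intro s ω
        exact mem_simplex_le_one (h2 s) ω

lemma ConcaveSet_eq_image (u : Fin n → A → ℝ) {μ θ : Fin n → ℝ} (hn : 1 ≤ n)
    (hθ : θ ∈ simplex n) :
    ConcaveSet u μ θ = valmap u μ θ (n + 2) '' Xset θ (n + 2) := by
  apply Set.Subset.antisymm
  · rintro v ⟨m, φ, η, hφ, hη, hconstr, hval⟩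
    -- Carathéodory reduction to `n + 2` points
    have hfinE : Module.finrank ℝ ((Fin n → ℝ) × ℝ) = n + 1 := by
      rw [Module.finrank_prod, Module.finrank_pi, Module.finrank_self, Fintype.card_fin]
    set g : Fin m → (Fin n → ℝ) × ℝ := fun s => (η s, fobj u μ θ (η s)) with hg
    have hsum1 : ∑ s, φ s = 1 := sum_phi_one hθ hη hconstr
    have hsumg : ∑ s, φ s • g s = ((θ, v) : (Fin n → ℝ) × ℝ) := by
      apply Prod.ext
      · rw [Prod.fst_sum]
        funext ω
        rw [Finset.sum_apply]
        simp only [hg, Pi.smul_apply, smul_eq_mul]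
        exact hconstr ω
      · rw [Prod.snd_sum]
        simp only [hg, smul_eq_mul]
        rw [hval]
        exact (Finset.sum_congr rfl fun s _ => by
          simp [hg, fobj, Prod.smul_snd, smul_eq_mul, mul_assoc]).symm
    have hmemhull : ((θ, v) : (Fin n → ℝ) × ℝ)
        ∈ convexHull ℝ (↑(Finset.univ.image g) : Set ((Fin n → ℝ) × ℝ)) := by
      have := Finset.centerMass_mem_convexHull
        (s := (↑(Finset.univ.image g) : Set ((Fin n → ℝ) × ℝ)))
        Finset.univ (w := φ) (fun s _ => hφ s) (by rw [hsum1]; norm_num)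
        (z := g) (fun s _ => Finset.mem_coe.mpr (Finset.mem_image_of_mem g (Finset.mem_univ s)))
      rwa [Finset.centerMass_eq_of_sum_1 _ _ hsum1, hsumg] at this
    rw [convexHull_eq_union] at hmemhull
    simp only [Set.mem_iUnion] at hmemhull
    obtain ⟨t, hts, hai, hmem⟩ := hmemhull
    have hcard : t.card ≤ n + 2 := by
      have h5 := hai.card_le_finrank_succ
      rw [Fintype.card_coe] at h5
      have h6 := Submodule.finrank_le
        (vectorSpan ℝ (Set.range (Subtype.val : ↥t → (Fin n → ℝ) × ℝ)))
      rw [hfinE] at h6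
      omega
    rw [Finset.convexHull_eq] at hmem
    obtain ⟨w, hw0, hw1, hwc⟩ := hmem
    rw [Finset.centerMass_eq_of_sum_1 _ _ hw1] at hwc
    -- the family indexed by `↥t`
    have hty : ∀ y : ↥t, (y : (Fin n → ℝ) × ℝ).1 ∈ simplex n
        ∧ (y : (Fin n → ℝ) × ℝ).2 = fobj u μ θ (y : (Fin n → ℝ) × ℝ).1 := by
      intro y
      have := hts y.2
      simp only [Finset.coe_image, Set.mem_image, Finset.coe_univ, Set.image_univ,
        Set.mem_range] at this
      obtain ⟨s, hs⟩ := this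
      rw [← hs]
      exact ⟨hη s, rfl⟩
    have hconstr2 : ∀ ω, ∑ y : ↥t, w y * (y : (Fin n → ℝ) × ℝ).1 ω = θ ω := by
      intro ω
      have h1 := congrArg Prod.fst hwc
      rw [Prod.fst_sum] at h1
      have h2 := congrArg (fun q => q ω) h1
      simp only at h2
      rw [Finset.sum_apply] at h2
      rw [Finset.sum_coe_sort t (fun y => w y * y.1 ω)]
      simpa using h2
    have hval2 : ∑ y : ↥t, w y * Ratio μ θ ((y : (Fin n → ℝ) × ℝ).1)
        * Cost u ((y : (Fin n → ℝ) × ℝ).1) = v := by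
      have h1 := congrArg Prod.snd hwc
      rw [Prod.snd_sum] at h1
      simp only at h1
      rw [Finset.sum_coe_sort t (fun y => w y * Ratio μ θ y.1 * Cost u y.1)]
      rw [← h1]
      refine Finset.sum_congr rfl fun y hy => ?_
      have h7 := (hty ⟨y, hy⟩).2
      simp only at h7
      simp [h7, fobj, Prod.smul_snd, smul_eq_mul, mul_assoc]
    obtain ⟨φ', η', h1, h2, h3, h4, -⟩ := fam_pad u μ θ hn (n + 2)
      (by rw [Fintype.card_coe]; exact hcard) (fun y : ↥t => w y)
      (fun y : ↥t => (y : (Fin n → ℝ) × ℝ).1)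
      (fun y => hw0 y y.2) (fun y => (hty y).1)
    refine ⟨(φ', η'), ⟨h1, h2, fun ω => (h3 ω).trans (hconstr2 ω)⟩, ?_⟩
    rw [valmap]
    simp only
    rw [h4, hval2]
  · rintro v ⟨p, ⟨h1, h2, h3⟩, rfl⟩
    exact mem_ConcaveSet u hn h1 h2 h3

lemma sSup_mem_ConcaveSet (u : Fin n → A → ℝ) {μ θ : Fin n → ℝ} (hn : 1 ≤ n)
    (hμ : μ ∈ simplex n) (hθ : θ ∈ simplex n) (hθpos : ∀ ω, 0 < θ ω) :
    sSup (ConcaveSet u μ θ) ∈ ConcaveSet u μ θ := by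
  have hcomp : IsCompact (ConcaveSet u μ θ) := by
    rw [ConcaveSet_eq_image u hn hθ]
    exact ((isCompact_Xset hθ (n + 2)).image (continuous_valmap u μ θ (n + 2)))
  exact hcomp.sSup_mem (ConcaveSet_nonempty u hn hθ)

/-! ### Sparsification -/

/-- Number of nonzero coordinates. -/
def suppc (v : Fin n → ℝ) : ℕ := (Finset.univ.filter (fun ω => v ω ≠ 0)).card

lemma Ratio_zero (μ θ : Fin n → ℝ) : Ratio μ θ (0 : Fin n → ℝ) = 0 := by simp [Ratio]

lemma Lgap_zero (u : Fin n → A → ℝ) (b : A) : Lgap u b (0 : Fin n → ℝ) = 0 := by simp [Lgap]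

lemma Ratio_neg (μ θ : Fin n → ℝ) (d : Fin n → ℝ) : Ratio μ θ (-d) = -Ratio μ θ d := by
  have := Ratio_add_smul μ θ 0 d (-1)
  simp only [neg_smul, one_smul, zero_add, Ratio_zero, neg_mul, one_mul] at this
  simpa using this

lemma Lgap_neg (u : Fin n → A → ℝ) (b : A) (d : Fin n → ℝ) : Lgap u b (-d) = -Lgap u b d := by
  have := Lgap_add_smul u b 0 d (-1)
  simp only [neg_smul, one_smul, zero_add, Lgap_zero, neg_mul, one_mul] at this
  simpa using this

/-- Existence of a feasible perturbation direction when the support is large. -/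
lemma exists_dir (u : Fin n → A → ℝ) (μ θ : Fin n → ℝ) (v : Fin n → ℝ)
    (hsupp : Fintype.card A + 3 ≤ suppc v) :
    ∃ d : Fin n → ℝ, d ≠ 0 ∧ (∀ ω, v ω = 0 → d ω = 0) ∧ (∑ ω, d ω = 0) ∧
      Ratio μ θ d = 0 ∧ ∀ b, Lgap u b d = 0 := by
  classical
  set Z : Finset (Fin n) := Finset.univ.filter (fun ω => v ω = 0) with hZ
  have hZcard : suppc v + Z.card = n := by
    have h := Finset.card_filter_add_card_filter_not
      (s := (Finset.univ : Finset (Fin n))) (p := fun ω => v ω ≠ 0)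
    simp only [not_not, Finset.card_univ, Fintype.card_fin] at h
    unfold suppc
    rw [hZ]
    convert h using 3
  -- the linear map collecting all constraints
  set Φ : (Fin n → ℝ) →ₗ[ℝ] ℝ × ℝ × (A → ℝ) × (↥Z → ℝ) :=
    { toFun := fun d => (∑ ω, d ω, Ratio μ θ d, fun b => Lgap u b d, fun z => d z.1)
      map_add' := by
        intro x y
        have h1 : Ratio μ θ (x + y) = Ratio μ θ x + Ratio μ θ y := by
          have := Ratio_add_smul μ θ x y 1
          simpa using this
        have h2 : ∀ b, Lgap u b (x + y) = Lgap u b x + Lgap u b y := by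
          intro b
          have := Lgap_add_smul u b x y 1
          simpa using this
        have h3 : ∑ ω, (x + y) ω = (∑ ω, x ω) + ∑ ω, y ω := by
          have := sum_add_smul x y 1
          simpa using this
        simp only [Prod.mk_add_mk, Prod.mk.injEq]
        refine ⟨h3, h1, funext fun b => h2 b, rfl⟩
      map_smul' := by
        intro t x
        have h1 : Ratio μ θ (t • x) = t * Ratio μ θ x := by
          have := Ratio_add_smul μ θ 0 x t
          simpa [Ratio_zero] using this
        have h2 : ∀ b, Lgap u b (t • x) = t * Lgap u b x := by
          intro b
          have := Lgap_add_smul u b 0 x t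
          simpa [Lgap_zero] using this
        have h3 : ∑ ω, (t • x) ω = t * ∑ ω, x ω := by
          have := sum_add_smul 0 x t
          simpa using this
        simp only [RingHom.id_apply, Prod.smul_mk, Prod.mk.injEq, smul_eq_mul]
        refine ⟨h3, h1, funext fun b => h2 b, rfl⟩ }
  have hker : LinearMap.ker Φ ≠ ⊥ := by
    intro hbot
    have hinj : Function.Injective Φ := LinearMap.ker_eq_bot.mp hbot
    have hle := LinearMap.finrank_le_finrank_of_injective hinj
    rw [Module.finrank_pi, Fintype.card_fin] at hle
    have hcodom : Module.finrank ℝ (ℝ × ℝ × (A → ℝ) × (↥Z → ℝ))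
        = 1 + (1 + (Fintype.card A + Z.card)) := by
      rw [Module.finrank_prod, Module.finrank_prod, Module.finrank_prod,
        Module.finrank_pi, Module.finrank_pi, Module.finrank_self, Fintype.card_coe]
    rw [hcodom] at hle
    omega
  obtain ⟨d, hdker, hd0⟩ := (Submodule.ne_bot_iff _).mp hker
  have hΦd : Φ d = 0 := hdker
  have h1 := congrArg Prod.fst hΦd
  have h2 := congrArg (fun q => q.2.1) hΦd
  have h3 := congrArg (fun q => q.2.2.1) hΦd
  have h4 := congrArg (fun q => q.2.2.2) hΦd
  simp only [Φ, LinearMap.coe_mk, AddHom.coe_mk] at h1 h2 h3 h4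
  refine ⟨d, hd0, ?_, h1, h2, fun b => congrFun h3 b⟩
  intro ω hω
  have hωZ : ω ∈ Z := by
    rw [hZ]
    simp [hω]
  exact congrFun h4 ⟨ω, hωZ⟩

/-- The fixed-value polytope used for sparsification. -/
def Qset (u : Fin n → A → ℝ) (μ θ : Fin n → ℝ) (a₀ : A) (η : Fin n → ℝ) :
    Set (Fin n → ℝ) :=
  {v | v ∈ simplex n ∧ Ratio μ θ v = Ratio μ θ η ∧ Lgap u a₀ v = Lgap u a₀ η ∧
    ∀ b, Lgap u a₀ v ≤ Lgap u b v}

lemma fobj_eq_on_Qset {u : Fin n → A → ℝ} {μ θ : Fin n → ℝ} {a₀ : A} {η : Fin n → ℝ}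
    (hη : ∀ b, Lgap u a₀ η ≤ Lgap u b η) {v : Fin n → ℝ}
    (hv : v ∈ Qset u μ θ a₀ η) : fobj u μ θ v = fobj u μ θ η := by
  obtain ⟨hs, hr, hl, hmin⟩ := hv
  unfold fobj
  rw [hr, Cost_eq_of_le u v a₀ hmin, hl, Cost_eq_of_le u η a₀ hη]

/-- Moving along a feasible direction until a support constraint binds. -/
lemma step_dir {u : Fin n → A → ℝ} {μ θ : Fin n → ℝ} {a₀ : A} {η : Fin n → ℝ}
    {v : Fin n → ℝ} (hv : v ∈ Qset u μ θ a₀ η) (d : Fin n → ℝ) (hd0 : d ≠ 0)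
    (hdz : ∀ ω, v ω = 0 → d ω = 0) (hds : ∑ ω, d ω = 0)
    (hdr : Ratio μ θ d = 0) (hdL : ∀ b, Lgap u b d = 0) :
    ∃ t : ℝ, 0 < t ∧ (v + t • d) ∈ Qset u μ θ a₀ η ∧ suppc (v + t • d) < suppc v := by
  classical
  obtain ⟨hvs, hvr, hvl, hvmin⟩ := hv
  have hS1 : ∃ ω, d ω < 0 := by
    by_contra h
    push_neg at h
    have : ∀ ω ∈ Finset.univ, d ω = 0 :=
      (Finset.sum_eq_zero_iff_of_nonneg (fun ω _ => h ω)).mp hds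
    exact hd0 (funext fun ω => this ω (Finset.mem_univ ω))
  set S1 : Finset (Fin n) := Finset.univ.filter (fun ω => d ω < 0) with hS1def
  have hS1ne : S1.Nonempty := by
    obtain ⟨ω, hω⟩ := hS1
    exact ⟨ω, by simp [hS1def, hω]⟩
  set B : Finset ℝ := S1.image (fun ω => v ω / (-d ω)) with hBdef
  have hBne : B.Nonempty := hS1ne.image _
  set t := B.min' hBne with htdef
  have hvpos : ∀ ω, d ω < 0 → 0 < v ω := by
    intro ω hω
    rcases eq_or_lt_of_le (hvs.1 ω) with h | h
    · exact absurd (hdz ω h.symm) (ne_of_lt hω)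
    · exact h
  have hBpos : ∀ x ∈ B, 0 < x := by
    intro x hx
    rw [hBdef] at hx
    obtain ⟨ω, hωS, rfl⟩ := Finset.mem_image.mp hx
    rw [hS1def] at hωS
    have hω : d ω < 0 := (Finset.mem_filter.mp hωS).2
    exact div_pos (hvpos ω hω) (by linarith)
  have htpos : 0 < t := hBpos _ (B.min'_mem hBne)
  have htle : ∀ ω, d ω < 0 → t ≤ v ω / (-d ω) := by
    intro ω hω
    apply Finset.min'_le
    rw [hBdef]
    exact Finset.mem_image.mpr ⟨ω, by simp [hS1def, hω], rfl⟩
  have hnn : ∀ ω, 0 ≤ (v + t • d) ω := by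
    intro ω
    simp only [Pi.add_apply, Pi.smul_apply, smul_eq_mul]
    rcases le_or_gt 0 (d ω) with h | h
    · have : 0 ≤ t * d ω := mul_nonneg htpos.le h
      linarith [hvs.1 ω]
    · have h1 := htle ω h
      rw [le_div_iff₀ (by linarith : (0:ℝ) < -d ω)] at h1
      linarith
  have hLeq : ∀ b, Lgap u b (v + t • d) = Lgap u b v := by
    intro b
    rw [Lgap_add_smul, hdL b, mul_zero, add_zero]
  have hmemQ : (v + t • d) ∈ Qset u μ θ a₀ η := by
    refine ⟨⟨hnn, ?_⟩, ?_, ?_, ?_⟩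
    · rw [sum_add_smul, hvs.2, hds, mul_zero, add_zero]
    · rw [Ratio_add_smul, hdr, mul_zero, add_zero, hvr]
    · rw [hLeq, hvl]
    · intro b
      rw [hLeq, hLeq]
      exact hvmin b
  refine ⟨t, htpos, hmemQ, ?_⟩
  -- some coordinate of the support is killed
  obtain ⟨ω₀, hω₀S, hω₀eq⟩ := Finset.mem_image.mp (by rw [← hBdef]; exact B.min'_mem hBne)
  rw [hS1def] at hω₀S
  have hω₀d : d ω₀ < 0 := (Finset.mem_filter.mp hω₀S).2
  have hω₀v : 0 < v ω₀ := hvpos ω₀ hω₀d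
  have hkill : (v + t • d) ω₀ = 0 := by
    simp only [Pi.add_apply, Pi.smul_apply, smul_eq_mul]
    rw [htdef, ← hω₀eq]
    have h5 : v ω₀ / -d ω₀ * d ω₀ = - v ω₀ := by
      rw [div_mul_eq_mul_div, div_eq_iff (show (-d ω₀) ≠ 0 by linarith)]
      ring
    rw [h5]
    ring
  have hsub : (Finset.univ.filter (fun ω => (v + t • d) ω ≠ 0))
      ⊆ (Finset.univ.filter (fun ω => v ω ≠ 0)).erase ω₀ := by
    intro ω hω
    rw [Finset.mem_filter] at hω
    rw [Finset.mem_erase, Finset.mem_filter]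
    refine ⟨?_, Finset.mem_univ ω, ?_⟩
    · rintro rfl
      exact hω.2 hkill
    · intro hv0
      apply hω.2
      simp only [Pi.add_apply, Pi.smul_apply, smul_eq_mul, hv0, hdz ω hv0, mul_zero, add_zero]
  calc suppc (v + t • d) ≤ ((Finset.univ.filter (fun ω => v ω ≠ 0)).erase ω₀).card :=
        Finset.card_le_card hsub
    _ < suppc v := Finset.card_erase_lt_of_mem (by simp [ne_of_gt hω₀v])

/-- Decomposition of a point of `Qset` into sparse points of `Qset`. -/
lemma Q_decomp (u : Fin n → A → ℝ) (μ θ : Fin n → ℝ) (a₀ : A) (η : Fin n → ℝ) :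
    ∀ (k : ℕ) (v : Fin n → ℝ), v ∈ Qset u μ θ a₀ η → suppc v ≤ k →
    ∃ (m : ℕ) (lam : Fin m → ℝ) (vs : Fin m → Fin n → ℝ),
      (∀ j, 0 ≤ lam j) ∧ (∑ j, lam j = 1) ∧ (∀ j, vs j ∈ Qset u μ θ a₀ η) ∧
      (∀ j, suppc (vs j) ≤ Fintype.card A + 2) ∧
      (∀ ω, ∑ j, lam j * vs j ω = v ω) := by
  intro k
  induction k with
  | zero =>
    intro v hv hk
    exact ⟨1, fun _ => 1, fun _ => v, fun _ => zero_le_one, by simp, fun _ => hv,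
      fun _ => hk.trans (Nat.zero_le _), fun ω => by simp⟩
  | succ k ih =>
    intro v hv hk
    rcases le_or_gt (suppc v) (Fintype.card A + 2) with hsmall | hbig
    · exact ⟨1, fun _ => 1, fun _ => v, fun _ => zero_le_one, by simp, fun _ => hv,
        fun _ => hsmall, fun ω => by simp⟩
    · obtain ⟨d, hd0, hdz, hds, hdr, hdL⟩ := exists_dir u μ θ v (by omega)
      obtain ⟨tp, htp, hQp, hsp⟩ := step_dir hv d hd0 hdz hds hdr hdL
      obtain ⟨tm, htm, hQm, hsm⟩ := step_dir hv (-d) (neg_ne_zero.mpr hd0)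
        (fun ω hω => by rw [Pi.neg_apply, hdz ω hω, neg_zero])
        (by simp only [Pi.neg_apply]; rw [Finset.sum_neg_distrib, hds, neg_zero])
        (by rw [Ratio_neg, hdr, neg_zero]) (fun b => by rw [Lgap_neg, hdL b, neg_zero])
      obtain ⟨m1, lam1, vs1, h1a, h1b, h1c, h1d, h1e⟩ := ih (v + tp • d) hQp (by omega)
      obtain ⟨m2, lam2, vs2, h2a, h2b, h2c, h2d, h2e⟩ := ih (v + tm • (-d)) hQm (by omega)
      have hs : (0:ℝ) < tp + tm := by linarith
      refine ⟨m1 + m2, Fin.append (fun j => (tm / (tp + tm)) * lam1 j)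
        (fun j => (tp / (tp + tm)) * lam2 j), Fin.append vs1 vs2, ?_, ?_, ?_, ?_, ?_⟩
      · intro j
        refine Fin.addCases (fun i => ?_) (fun i => ?_) j
        · rw [Fin.append_left]
          exact mul_nonneg (div_nonneg htm.le hs.le) (h1a i)
        · rw [Fin.append_right]
          exact mul_nonneg (div_nonneg htp.le hs.le) (h2a i)
      · rw [Fin.sum_univ_add]
        simp only [Fin.append_left, Fin.append_right]
        rw [← Finset.mul_sum, ← Finset.mul_sum, h1b, h2b, mul_one, mul_one]
        field_simp
        ring
      · intro j
        refine Fin.addCases (fun i => ?_) (fun i => ?_) j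
        · rw [Fin.append_left]; exact h1c i
        · rw [Fin.append_right]; exact h2c i
      · intro j
        refine Fin.addCases (fun i => ?_) (fun i => ?_) j
        · rw [Fin.append_left]; exact h1d i
        · rw [Fin.append_right]; exact h2d i
      · intro ω
        rw [Fin.sum_univ_add]
        simp only [Fin.append_left, Fin.append_right]
        have e1 : ∑ i, (tm / (tp + tm)) * lam1 i * vs1 i ω
            = (tm / (tp + tm)) * (v ω + tp * d ω) := by
          have h6 : ∑ i, (tm / (tp + tm)) * lam1 i * vs1 i ω
              = (tm / (tp + tm)) * ∑ i, lam1 i * vs1 i ω := by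
            rw [Finset.mul_sum]
            exact Finset.sum_congr rfl fun i _ => by ring
          rw [h6, h1e ω]
          simp [mul_comm]
        have e2 : ∑ i, (tp / (tp + tm)) * lam2 i * vs2 i ω
            = (tp / (tp + tm)) * (v ω - tm * d ω) := by
          have h6 : ∑ i, (tp / (tp + tm)) * lam2 i * vs2 i ω
              = (tp / (tp + tm)) * ∑ i, lam2 i * vs2 i ω := by
            rw [Finset.mul_sum]
            exact Finset.sum_congr rfl fun i _ => by ring
          rw [h6, h2e ω]
          simp only [Pi.add_apply, Pi.smul_apply, Pi.neg_apply, smul_eq_mul]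
          ring_nf
        rw [e1, e2]
        field_simp
        ring

lemma Cost_eq_zero_of_card_one (u : Fin n → A → ℝ) (hA : Fintype.card A = 1)
    (v : Fin n → ℝ) : Cost u v = 0 := by
  have hsub : ∀ (a : A) ω, u ω a = uStar u ω := by
    intro a ω
    apply le_antisymm
    · exact Finset.le_sup' (u ω) (Finset.mem_univ a)
    · apply Finset.sup'_le
      intro x _
      rw [Fintype.card_le_one_iff.mp hA.le x a]
  have hconst : (fun a => ∑ ω, v ω * u ω a) = fun _ : A => ∑ ω, v ω * uStar u ω :=
    funext fun a => Finset.sum_congr rfl fun ω _ => by rw [hsub a ω]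
  unfold Cost
  rw [hconst, Finset.sup'_const]
  ring

/-- Sparsification: any posterior splits into sparse posteriors with the same `fobj` value. -/
lemma sparse_decomp (u : Fin n → A → ℝ) (μ θ : Fin n → ℝ) (hn : 1 ≤ n)
    {η : Fin n → ℝ} (hη : η ∈ simplex n) :
    ∃ (m : ℕ) (lam : Fin m → ℝ) (vs : Fin m → Fin n → ℝ),
      (∀ j, 0 ≤ lam j) ∧ (∀ j, vs j ∈ simplex n) ∧ (∀ j, sparse A (vs j)) ∧
      (∀ ω, ∑ j, lam j * vs j ω = η ω) ∧
      (∀ j, fobj u μ θ (vs j) = fobj u μ θ η) := by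
  classical
  rcases le_or_gt 2 (Fintype.card A) with hA2 | hA1
  · -- at least two actions : use the polytope decomposition
    obtain ⟨a₀, -, ha₀⟩ := Finset.exists_mem_eq_inf' (Finset.univ_nonempty (α := A))
      (fun b => Lgap u b η)
    have ha₀min : ∀ b, Lgap u a₀ η ≤ Lgap u b η := by
      intro b
      rw [← ha₀]
      exact Finset.inf'_le _ (Finset.mem_univ b)
    have hηQ : η ∈ Qset u μ θ a₀ η := ⟨hη, rfl, rfl, ha₀min⟩
    obtain ⟨m, lam, vs, h1, h2, h3, h4, h5⟩ :=
      Q_decomp u μ θ a₀ η (suppc η) η hηQ le_rfl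
    refine ⟨m, lam, vs, h1, fun j => (h3 j).1, ?_, h5, fun j => fobj_eq_on_Qset ha₀min (h3 j)⟩
    intro j
    unfold sparse
    have := h4 j
    unfold suppc at this
    omega
  · -- a single action : `fobj` vanishes, use point masses
    have hA1' : Fintype.card A = 1 := by
      have := Fintype.card_pos (α := A)
      omega
    refine ⟨n, η, fun i ω => if ω = i then 1 else 0, fun i => hη.1 i, ?_, ?_, ?_, ?_⟩
    · intro i
      constructor
      · intro ω; simp only; split <;> norm_num
      · simp
    · intro i
      unfold sparse
      have hsingle : (Finset.univ.filter (fun ω => (if ω = i then (1:ℝ) else 0) ≠ 0)) = {i} := by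
        ext ω
        simp only [Finset.mem_filter, Finset.mem_univ, true_and, Finset.mem_singleton]
        split <;> simp_all
      rw [hsingle, Finset.card_singleton]
      omega
    · intro ω
      rw [Finset.sum_eq_single ω]
      · simp
      · intro b _ hb
        simp [Ne.symm hb]
      · simp
    · intro j
      unfold fobj
      rw [Cost_eq_zero_of_card_one u hA1', Cost_eq_zero_of_card_one u hA1', mul_zero, mul_zero]

/-! ### Reduction of the number of signals at the optimum -/

lemma finset_fam_mem_ConcaveSet (u : Fin n → A → ℝ) {μ θ : Fin n → ℝ} (hn : 1 ≤ n)
    (P : Finset (Fin n → ℝ)) (w : (Fin n → ℝ) → ℝ)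
    (hw : ∀ p ∈ P, 0 ≤ w p) (hP : ∀ p ∈ P, p ∈ simplex n)
    (hconstr : ∀ ω, ∑ p ∈ P, w p * p ω = θ ω) :
    (∑ p ∈ P, w p * fobj u μ θ p) ∈ ConcaveSet u μ θ := by
  classical
  have h1 : ∑ p ∈ P, w p * fobj u μ θ p
      = ∑ y : ↥P, (w y) * Ratio μ θ (y : Fin n → ℝ) * Cost u (y : Fin n → ℝ) := by
    rw [Finset.sum_coe_sort P (fun p => w p * Ratio μ θ p * Cost u p)]
    exact Finset.sum_congr rfl fun p _ => by rw [fobj, mul_assoc]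
  rw [h1]
  apply mem_ConcaveSet u hn (fun y : ↥P => hw y y.2) (fun y : ↥P => hP y y.2)
  intro ω
  rw [Finset.sum_coe_sort P (fun p => w p * p ω)]
  exact hconstr ω

lemma reduce_fam (u : Fin n → A → ℝ) {μ θ : Fin n → ℝ} (hn : 1 ≤ n)
    (hμ : μ ∈ simplex n) (hθ : θ ∈ simplex n) (hθpos : ∀ ω, 0 < θ ω) :
    ∀ (k : ℕ) (P : Finset (Fin n → ℝ)) (w : (Fin n → ℝ) → ℝ), P.card ≤ k →
    (∀ p ∈ P, 0 ≤ w p) → (∀ p ∈ P, p ∈ simplex n) → (∀ p ∈ P, sparse A p) →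
    (∀ ω, ∑ p ∈ P, w p * p ω = θ ω) →
    (∑ p ∈ P, w p * fobj u μ θ p = sSup (ConcaveSet u μ θ)) →
    ∃ (P' : Finset (Fin n → ℝ)) (w' : (Fin n → ℝ) → ℝ), P'.card ≤ n ∧
      (∀ p ∈ P', 0 ≤ w' p) ∧ (∀ p ∈ P', p ∈ simplex n) ∧ (∀ p ∈ P', sparse A p) ∧
      (∀ ω, ∑ p ∈ P', w' p * p ω = θ ω) ∧
      (∑ p ∈ P', w' p * fobj u μ θ p = sSup (ConcaveSet u μ θ)) := by
  classical
  intro k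
  induction k with
  | zero =>
    intro P w hcard hw hP hsp hconstr hval
    exact ⟨P, w, by omega, hw, hP, hsp, hconstr, hval⟩
  | succ k ih =>
    intro P w hcard hw hP hsp hconstr hval
    rcases le_or_gt P.card n with hPn | hPn
    · exact ⟨P, w, hPn, hw, hP, hsp, hconstr, hval⟩
    -- the key step : construct w' vanishing somewhere on P
    suffices h : ∃ (w' : (Fin n → ℝ) → ℝ) (p₀ : Fin n → ℝ), p₀ ∈ P ∧ w' p₀ = 0 ∧
        (∀ p ∈ P, 0 ≤ w' p) ∧ (∀ ω, ∑ p ∈ P, w' p * p ω = θ ω) ∧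
        (∑ p ∈ P, w' p * fobj u μ θ p = sSup (ConcaveSet u μ θ)) by
      obtain ⟨w', p₀, hp₀, hw'0, hw', hconstr', hval'⟩ := h
      apply ih (P.erase p₀) w'
      · have := Finset.card_erase_lt_of_mem hp₀
        omega
      · exact fun p hp => hw' p (Finset.mem_of_mem_erase hp)
      · exact fun p hp => hP p (Finset.mem_of_mem_erase hp)
      · exact fun p hp => hsp p (Finset.mem_of_mem_erase hp)
      · intro ω
        rw [Finset.sum_erase _ (by rw [hw'0, zero_mul])]
        exact hconstr' ω
      · rw [Finset.sum_erase _ (by rw [hw'0, zero_mul])]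
        exact hval'
    rcases em (∃ p₀ ∈ P, w p₀ = 0) with ⟨p₀, hp₀, hwp₀⟩ | hallpos
    · exact ⟨w, p₀, hp₀, hwp₀, hw, hconstr, hval⟩
    push_neg at hallpos
    have hwpos : ∀ p ∈ P, 0 < w p := fun p hp => lt_of_le_of_ne (hw p hp)
      (Ne.symm (hallpos p hp))
    have hPne : P.Nonempty := Finset.card_pos.mp (by omega)
    -- linear dependence of the points of `P`
    have hdep : ¬LinearIndependent ℝ (Subtype.val : ↥P → (Fin n → ℝ)) := by
      intro hli
      have := hli.fintype_card_le_finrank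
      rw [Fintype.card_coe, Module.finrank_pi, Fintype.card_fin] at this
      omega
    obtain ⟨g, hg0, y₁, hy₁⟩ := Fintype.not_linearIndependent_iff.mp hdep
    set c : (Fin n → ℝ) → ℝ := fun p => if h : p ∈ P then g ⟨p, h⟩ else 0 with hc
    have hcy : ∀ y : ↥P, c (y : Fin n → ℝ) = g y := by
      intro y
      rw [hc]
      simp only [y.2, dif_pos]
    have hczero : ∀ ω, ∑ p ∈ P, c p * p ω = 0 := by
      intro ω
      have h2 := congrFun hg0 ω
      rw [Finset.sum_apply] at h2
      rw [← Finset.sum_coe_sort P (fun p => c p * p ω)]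
      simp only [hcy]
      simpa using h2
    have hcsum : ∑ p ∈ P, c p = 0 := by
      have h3 : ∑ p ∈ P, c p = ∑ p ∈ P, ∑ ω, c p * p ω := by
        refine Finset.sum_congr rfl fun p hp => ?_
        rw [← Finset.mul_sum, (hP p hp).2, mul_one]
      rw [h3, Finset.sum_comm]
      simp [hczero]
    have hcne : ∃ p ∈ P, c p ≠ 0 := ⟨y₁, y₁.2, by rw [hcy]; exact hy₁⟩
    -- the slope vanishes at an optimum
    set σ : ℝ := ∑ p ∈ P, c p * fobj u μ θ p with hσ
    have hbdd := ConcaveSet_bddAbove u hμ hθ hθpos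
    have hpert : ∀ ε : ℝ, (∀ p ∈ P, 0 ≤ w p + ε * c p) →
        sSup (ConcaveSet u μ θ) + ε * σ ≤ sSup (ConcaveSet u μ θ) := by
      intro ε hε
      have hmem := finset_fam_mem_ConcaveSet u (μ := μ) (θ := θ) hn P (fun p => w p + ε * c p) hε hP (by
        intro ω
        have : ∑ p ∈ P, (w p + ε * c p) * p ω
            = ∑ p ∈ P, w p * p ω + ε * ∑ p ∈ P, c p * p ω := by
          rw [Finset.mul_sum, ← Finset.sum_add_distrib]
          exact Finset.sum_congr rfl fun p _ => by ring
        rw [this, hczero ω, mul_zero, add_zero, hconstr ω])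
      have heq : ∑ p ∈ P, (w p + ε * c p) * fobj u μ θ p
          = sSup (ConcaveSet u μ θ) + ε * σ := by
        rw [← hval, hσ, Finset.mul_sum, ← Finset.sum_add_distrib]
        exact Finset.sum_congr rfl fun p _ => by ring
      rw [heq] at hmem
      exact le_csSup hbdd hmem
    have hσ0 : σ = 0 := by
      set ε₀ : ℝ := (P.inf' hPne w) / (P.sup' hPne (fun p => |c p|) + 1) with hε₀
      have hinfpos : 0 < P.inf' hPne w := by
        obtain ⟨p, hp, hpe⟩ := Finset.exists_mem_eq_inf' hPne w
        rw [hpe]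
        exact hwpos p hp
      have hsupnn : 0 ≤ P.sup' hPne (fun p => |c p|) := by
        obtain ⟨p, hp⟩ := hPne
        exact le_trans (abs_nonneg (c p)) (Finset.le_sup' (fun p => |c p|) hp)
      have hε₀pos : 0 < ε₀ := div_pos hinfpos (by linarith)
      have hok : ∀ ε : ℝ, |ε| ≤ ε₀ → ∀ p ∈ P, 0 ≤ w p + ε * c p := by
        intro ε hεabs p hp
        have h4 : |ε * c p| ≤ ε₀ * |c p| := by
          rw [abs_mul]
          exact mul_le_mul_of_nonneg_right hεabs (abs_nonneg _)
        have h5 : ε₀ * |c p| < P.inf' hPne w := by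
          rw [hε₀, div_mul_eq_mul_div, div_lt_iff₀ (by linarith)]
          have h6 : |c p| ≤ P.sup' hPne (fun p => |c p|) := Finset.le_sup' (fun p => |c p|) hp
          nlinarith
        have h7 : P.inf' hPne w ≤ w p := Finset.inf'_le _ hp
        have h8 : -(ε * c p) ≤ |ε * c p| := neg_le_abs _
        linarith
      have hp1 := hpert ε₀ (hok ε₀ (by rw [abs_of_pos hε₀pos]))
      have hp2 := hpert (-ε₀) (hok (-ε₀) (by rw [abs_neg, abs_of_pos hε₀pos]))
      nlinarith
    -- move to the boundary
    obtain ⟨p₁, hp₁, hcp₁⟩ : ∃ p ∈ P, c p < 0 := by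
      by_contra h
      push_neg at h
      obtain ⟨p, hp, hpne⟩ := hcne
      exact hpne ((Finset.sum_eq_zero_iff_of_nonneg h).mp hcsum p hp)
    set S : Finset (Fin n → ℝ) := P.filter (fun p => c p < 0) with hS
    have hSne : S.Nonempty := ⟨p₁, by rw [hS]; exact Finset.mem_filter.mpr ⟨hp₁, hcp₁⟩⟩
    set tbar : ℝ := S.inf' hSne (fun p => w p / (-c p)) with htbar
    have htbar_nonneg : 0 ≤ tbar := by
      apply Finset.le_inf'
      intro p hp
      rw [hS, Finset.mem_filter] at hp
      exact div_nonneg (hw p hp.1) (by linarith [hp.2])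
    have htbar_le : ∀ p ∈ P, c p < 0 → tbar ≤ w p / (-c p) := by
      intro p hp hcp
      exact Finset.inf'_le _ (by rw [hS]; exact Finset.mem_filter.mpr ⟨hp, hcp⟩)
    have hw'nonneg : ∀ p ∈ P, 0 ≤ w p + tbar * c p := by
      intro p hp
      rcases le_or_gt 0 (c p) with h | h
      · have : 0 ≤ tbar * c p := mul_nonneg htbar_nonneg h
        linarith [hw p hp]
      · have h1 := htbar_le p hp h
        rw [le_div_iff₀ (by linarith : (0:ℝ) < -c p)] at h1
        linarith
    obtain ⟨p₀, hp₀S, hp₀eq⟩ := Finset.exists_mem_eq_inf' hSne (fun p => w p / (-c p))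
    rw [hS, Finset.mem_filter] at hp₀S
    refine ⟨fun p => w p + tbar * c p, p₀, hp₀S.1, ?_, hw'nonneg, ?_, ?_⟩
    · have h9 : w p₀ / (-c p₀) * c p₀ = -w p₀ := by
        rw [div_mul_eq_mul_div, div_eq_iff (show (-c p₀) ≠ 0 by linarith [hp₀S.2])]
        ring
      have h10 : tbar = w p₀ / (-c p₀) := by rw [htbar, hp₀eq]
      show w p₀ + tbar * c p₀ = 0
      rw [h10, h9]
      ring
    · intro ω
      have : ∑ p ∈ P, (w p + tbar * c p) * p ω
          = ∑ p ∈ P, w p * p ω + tbar * ∑ p ∈ P, c p * p ω := by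
        rw [Finset.mul_sum, ← Finset.sum_add_distrib]
        exact Finset.sum_congr rfl fun p _ => by ring
      rw [this, hczero ω, mul_zero, add_zero]
      exact hconstr ω
    · have : ∑ p ∈ P, (w p + tbar * c p) * fobj u μ θ p
          = ∑ p ∈ P, w p * fobj u μ θ p + tbar * σ := by
        rw [hσ, Finset.mul_sum, ← Finset.sum_add_distrib]
        exact Finset.sum_congr rfl fun p _ => by ring
      rw [this, hσ0, mul_zero, add_zero]
      exact hval

/-- Collapsing a family onto the finset of its distinct posteriors. -/
lemma fam_to_finset {ι : Type} [Fintype ι] (φ : ι → ℝ) (η : ι → Fin n → ℝ)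
    (F : (Fin n → ℝ) → ℝ) :
    ∑ p ∈ Finset.univ.image η, (∑ i ∈ Finset.univ.filter (fun i => η i = p), φ i) * F p
      = ∑ i, φ i * F (η i) := by
  classical
  rw [← Finset.sum_fiberwise_of_maps_to
    (fun i _ => Finset.mem_image_of_mem η (Finset.mem_univ i)) (fun i => φ i * F (η i))]
  refine Finset.sum_congr rfl fun p hp => ?_
  rw [Finset.sum_mul]
  refine Finset.sum_congr rfl fun i hi => ?_
  rw [(Finset.mem_filter.mp hi).2]

/-- there is a feasible family attaining the supremum of the single-type
problem with at most `n` signals in which every posterior has at most `2·|A|` nonzero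
coordinates. -/
theorem stmt12 (hn : 1 ≤ n) (u : Fin n → A → ℝ)
    (μ θ : Fin n → ℝ) (hμ : μ ∈ simplex n) (hθ : θ ∈ simplex n)
    (hθpos : ∀ ω, 0 < θ ω) :
    ∃ (m : ℕ) (φ : Fin m → ℝ) (η : Fin m → Fin n → ℝ),
      m ≤ n ∧
      (∀ s, 0 ≤ φ s) ∧ (∀ s, η s ∈ simplex n) ∧
      (∀ ω, ∑ s, φ s * η s ω = θ ω) ∧
      (∑ s, φ s * Ratio μ θ (η s) * Cost u (η s)) = sSup (ConcaveSet u μ θ) ∧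
      (∀ s, (Finset.univ.filter (fun ω => η s ω ≠ 0)).card ≤ 2 * Fintype.card A) := by
  classical
  obtain ⟨m, φ, η, hφ, hη, hconstr, hval⟩ := sSup_mem_ConcaveSet u hn hμ hθ hθpos
  -- sparsify each posterior
  choose k lam vs hlam hvs hsp hcomb hfeq using fun s => sparse_decomp u μ θ hn (hη s)
  set ι : Type := (s : Fin m) × Fin (k s) with hι
  set φc : ι → ℝ := fun i => φ i.1 * lam i.1 i.2 with hφc
  set ηc : ι → Fin n → ℝ := fun i => vs i.1 i.2 with hηc
  have hlamsum : ∀ s, ∑ j, lam s j = 1 := fun s => sum_phi_one (hη s) (hvs s) (hcomb s)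
  have hconstrc : ∀ ω, ∑ i : ι, φc i * ηc i ω = θ ω := by
    intro ω
    rw [← Finset.univ_sigma_univ, Finset.sum_sigma]
    have h1 : ∀ s : Fin m, ∑ j, φc ⟨s, j⟩ * ηc ⟨s, j⟩ ω = φ s * η s ω := by
      intro s
      have : ∑ j, φc ⟨s, j⟩ * ηc ⟨s, j⟩ ω = φ s * ∑ j, lam s j * vs s j ω := by
        rw [Finset.mul_sum]
        exact Finset.sum_congr rfl fun j _ => by rw [hφc, hηc]; ring
      rw [this, hcomb s ω]
    rw [Finset.sum_congr rfl fun s _ => h1 s]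
    exact hconstr ω
  have hvalc : ∑ i : ι, φc i * fobj u μ θ (ηc i) = sSup (ConcaveSet u μ θ) := by
    rw [← Finset.univ_sigma_univ, Finset.sum_sigma]
    have h1 : ∀ s : Fin m, ∑ j, φc ⟨s, j⟩ * fobj u μ θ (ηc ⟨s, j⟩)
        = φ s * fobj u μ θ (η s) := by
      intro s
      have h2 : ∑ j, φc ⟨s, j⟩ * fobj u μ θ (ηc ⟨s, j⟩)
          = (φ s * fobj u μ θ (η s)) * ∑ j, lam s j := by
        rw [Finset.mul_sum]
        refine Finset.sum_congr rfl fun j _ => ?_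
        rw [hφc, hηc]
        simp only
        rw [hfeq s j]
        ring
      rw [h2, hlamsum s, mul_one]
    rw [Finset.sum_congr rfl fun s _ => h1 s]
    rw [hval]
    exact Finset.sum_congr rfl fun s _ => by rw [fobj, mul_assoc]
  -- collapse onto a finset
  set P : Finset (Fin n → ℝ) := Finset.univ.image ηc with hPdef
  set w : (Fin n → ℝ) → ℝ := fun p => ∑ i ∈ Finset.univ.filter (fun i => ηc i = p), φc i
    with hwdef
  have hwP : ∀ p ∈ P, 0 ≤ w p := fun p _ =>
    Finset.sum_nonneg fun i _ => mul_nonneg (hφ i.1) (hlam i.1 i.2)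
  have hPsimplex : ∀ p ∈ P, p ∈ simplex n := by
    intro p hp
    obtain ⟨i, -, rfl⟩ := Finset.mem_image.mp hp
    exact hvs i.1 i.2
  have hPsparse : ∀ p ∈ P, sparse A p := by
    intro p hp
    obtain ⟨i, -, rfl⟩ := Finset.mem_image.mp hp
    exact hsp i.1 i.2
  have hPconstr : ∀ ω, ∑ p ∈ P, w p * p ω = θ ω := by
    intro ω
    rw [hPdef, hwdef]
    calc ∑ p ∈ Finset.univ.image ηc,
          (∑ i ∈ Finset.univ.filter (fun i => ηc i = p), φc i) * p ω
        = ∑ i : ι, φc i * ηc i ω := fam_to_finset φc ηc (fun v => v ω)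
      _ = θ ω := hconstrc ω
  have hPval : ∑ p ∈ P, w p * fobj u μ θ p = sSup (ConcaveSet u μ θ) := by
    rw [hPdef, hwdef]
    calc ∑ p ∈ Finset.univ.image ηc,
          (∑ i ∈ Finset.univ.filter (fun i => ηc i = p), φc i) * fobj u μ θ p
        = ∑ i : ι, φc i * fobj u μ θ (ηc i) := fam_to_finset φc ηc (fobj u μ θ)
      _ = _ := hvalc
  -- reduce the number of signals to `n`
  obtain ⟨P', w', hcard', hw', hsimplex', hsparse', hconstr', hval'⟩ :=
    reduce_fam u hn hμ hθ hθpos P.card P w le_rfl hwP hPsimplex hPsparse hPconstr hPval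
  -- pad to exactly `n` signals
  obtain ⟨φ', η', h1, h2, h3, h4, h5⟩ := fam_pad u μ θ hn (ι := ↥P') n
    (by rw [Fintype.card_coe]; exact hcard') (fun y => w' y) (fun y => (y : Fin n → ℝ))
    (fun y => hw' y y.2) (fun y => hsimplex' y y.2)
  refine ⟨n, φ', η', le_rfl, h1, h2, ?_, ?_, ?_⟩
  · intro ω
    rw [h3 ω, Finset.sum_coe_sort P' (fun p => w' p * p ω)]
    exact hconstr' ω
  · rw [h4, Finset.sum_coe_sort P' (fun p => w' p * Ratio μ θ p * Cost u p)]
    rw [← hval']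
    exact Finset.sum_congr rfl fun p _ => by rw [fobj, mul_assoc]
  · exact h5 (fun y => hsparse' y y.2)

end
end

section
/- Suppose θ = μ. Then there exists a feasible family (S, (φ_s), (η^s)) attaining the supremum of the single-type problem (which equals C(μ)) with |S| ≤ n such that every posterior η^s has at most |A| nonzero coordinates, i.e., ‖η^s‖₀ ≤ |A| for all s ∈ S. -/
open Finset
open scoped Classical

noncomputable section

variable {n : ℕ} {A : Type*} [Fintype A] [Nonempty A]

/-! ### Auxiliary definitions and lemmas -/

/-- The polytope of posteriors at which action `a0` is optimal. -/
def Pset (u : Fin n → A → ℝ) (a0 : A) : Set (Fin n → ℝ) :=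
  {x | x ∈ simplex n ∧ ∀ a, ∑ ω, x ω * u ω a ≤ ∑ ω, x ω * u ω a0}

/-- Members of `Pset` with support of size at most `|A|`. -/
def Dset (u : Fin n → A → ℝ) (a0 : A) : Set (Fin n → ℝ) :=
  {x | x ∈ Pset u a0 ∧ (Finset.univ.filter (fun ω => x ω ≠ 0)).card ≤ Fintype.card A}

lemma ratio_eq_one (μ : Fin n → ℝ) (hpos : ∀ ω, 0 < μ ω) {η : Fin n → ℝ}
    (hη : η ∈ simplex n) : Ratio μ μ η = 1 := by
  unfold Ratio
  have h : ∀ ω : Fin n, μ ω * η ω / μ ω = η ω := fun ω =>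
    mul_div_cancel_left₀ _ (hpos ω).ne'
  rw [Finset.sum_congr rfl fun ω _ => h ω, hη.2]

lemma sum_swap_helper {ι : Type*} [Fintype ι] (φ : ι → ℝ) (η : ι → Fin n → ℝ)
    (g : Fin n → ℝ) :
    ∑ s, φ s * ∑ ω, η s ω * g ω = ∑ ω, (∑ s, φ s * η s ω) * g ω := by
  simp_rw [Finset.mul_sum, Finset.sum_mul, ← mul_assoc]
  exact Finset.sum_comm

lemma exists_kernel_dir (u : Fin n → A → ℝ) (a0 : A) (T : Finset (Fin n))
    (hT : Fintype.card A < T.card) :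
    ∃ d : Fin n → ℝ, d ≠ 0 ∧ (∀ ω, ω ∉ T → d ω = 0) ∧ (∑ ω, d ω = 0) ∧
      ∀ a, ∑ ω, d ω * u ω a = ∑ ω, d ω * u ω a0 := by
  classical
  let F : (T → ℝ) →ₗ[ℝ] ℝ × ({a : A // a ≠ a0} → ℝ) :=
    { toFun := fun c => (∑ i, c i, fun a => ∑ i, c i * (u i.1 a.1 - u i.1 a0))
      map_add' := by
        intro c c'
        ext
        · simp [Finset.sum_add_distrib]
        · simp [add_mul, Finset.sum_add_distrib]
      map_smul' := by
        intro r c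
        ext
        · simp [Finset.mul_sum]
        · simp [Finset.mul_sum, mul_assoc] }
  have hcard1 : Fintype.card {a : A // a ≠ a0} = Fintype.card A - 1 := by
    have := Fintype.card_subtype_compl (fun a : A => a = a0)
    simpa [Fintype.card_subtype_eq] using this
  have hlt : Module.finrank ℝ (ℝ × ({a : A // a ≠ a0} → ℝ)) < Module.finrank ℝ (T → ℝ) := by
    rw [Module.finrank_prod, Module.finrank_self, Module.finrank_pi, Module.finrank_pi,
      Fintype.card_coe, hcard1]
    have h2 : 0 < Fintype.card A := Fintype.card_pos
    omega
  have hker := LinearMap.ker_ne_bot_of_finrank_lt (f := F) hlt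
  obtain ⟨c, hcmem, hc0⟩ := (Submodule.ne_bot_iff _).mp hker
  have hFc : F c = 0 := LinearMap.mem_ker.mp hcmem
  have hc1 : ∑ i, c i = 0 := congrArg Prod.fst hFc
  have hc2 : ∀ a : {a : A // a ≠ a0}, ∑ i, c i * (u i.1 a.1 - u i.1 a0) = 0 := fun a =>
    congrFun (congrArg Prod.snd hFc) a
  set d : Fin n → ℝ := fun ω => if h : ω ∈ T then c ⟨ω, h⟩ else 0 with hd
  have key : ∀ g : Fin n → ℝ, (∑ ω, d ω * g ω) = ∑ i, c i * g i.1 := by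
    intro g
    have h1 : ∑ ω, d ω * g ω = ∑ ω ∈ T, d ω * g ω :=
      (Finset.sum_subset (Finset.subset_univ T) (fun ω _ hω => by
        simp [hd, dif_neg hω])).symm
    rw [h1, ← Finset.sum_attach T (fun ω => d ω * g ω), Finset.univ_eq_attach]
    refine Finset.sum_congr rfl fun i _ => ?_
    simp [hd, dif_pos i.2]
  refine ⟨d, ?_, ?_, ?_, ?_⟩
  · intro h
    apply hc0
    funext i
    have h2 := congrFun h i.1
    simpa [hd, i.2] using h2
  · intro ω hω
    simp [hd, dif_neg hω]
  · have h := key (fun _ => 1)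
    simp only [mul_one] at h
    rw [h]
    exact hc1
  · intro a
    by_cases ha : a = a0
    · rw [ha]
    · have h := hc2 ⟨a, ha⟩
      have h1 := key (fun ω => u ω a - u ω a0)
      rw [h] at h1
      have h2 : ∑ ω, d ω * u ω a - ∑ ω, d ω * u ω a0 = 0 := by
        rw [← Finset.sum_sub_distrib]
        simpa [mul_sub] using h1
      linarith

lemma push_lemma (u : Fin n → A → ℝ) (a0 : A) (x : Fin n → ℝ) (hx : x ∈ Pset u a0)
    (d : Fin n → ℝ) (hdsupp : ∀ ω, x ω = 0 → d ω = 0) (hdsum : ∑ ω, d ω = 0)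
    (hdact : ∀ a, ∑ ω, d ω * u ω a = ∑ ω, d ω * u ω a0)
    (hN : (Finset.univ.filter fun ω => d ω < 0).Nonempty) :
    ∃ t : ℝ, 0 < t ∧ (fun ω => x ω + t * d ω) ∈ Pset u a0 ∧
      (Finset.univ.filter fun ω => x ω + t * d ω ≠ 0) ⊂
        (Finset.univ.filter fun ω => x ω ≠ 0) := by
  classical
  set N := Finset.univ.filter fun ω => d ω < 0 with hNdef
  set t := N.inf' hN (fun ω => x ω / (-d ω)) with htdef
  have hxpos : ∀ ω ∈ N, 0 < x ω := by
    intro ω hω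
    have hdω : d ω < 0 := (Finset.mem_filter.mp hω).2
    rcases (hx.1.1 ω).lt_or_eq with h | h
    · exact h
    · exact absurd (hdsupp ω h.symm) hdω.ne
  have ht : 0 < t := by
    rw [htdef, Finset.lt_inf'_iff]
    intro ω hω
    exact div_pos (hxpos ω hω) (neg_pos.mpr (Finset.mem_filter.mp hω).2)
  obtain ⟨ω₁, hω₁N, hω₁⟩ := Finset.exists_mem_eq_inf' hN (fun ω => x ω / (-d ω))
  have hd₁ : d ω₁ < 0 := (Finset.mem_filter.mp hω₁N).2
  have hne₁ : (-d ω₁) ≠ 0 := (neg_pos.mpr hd₁).ne'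
  have ht1 : t * (-d ω₁) = x ω₁ := by
    rw [htdef, hω₁]; exact div_mul_cancel₀ _ hne₁
  have hy₁ : x ω₁ + t * d ω₁ = 0 := by linear_combination -ht1
  have hy_nonneg : ∀ ω, 0 ≤ x ω + t * d ω := by
    intro ω
    rcases lt_or_ge (d ω) 0 with h | h
    · have hmem : ω ∈ N := Finset.mem_filter.mpr ⟨Finset.mem_univ ω, h⟩
      have h1 : t ≤ x ω / (-d ω) := by rw [htdef]; exact Finset.inf'_le _ hmem
      have h2 : t * (-d ω) ≤ x ω := by
        rw [le_div_iff₀ (neg_pos.mpr h)] at h1; exact h1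
      linarith
    · have h3 := mul_nonneg ht.le h
      linarith [hx.1.1 ω]
  have hy_sum : ∑ ω, (x ω + t * d ω) = 1 := by
    rw [Finset.sum_add_distrib, ← Finset.mul_sum, hdsum, mul_zero, add_zero, hx.1.2]
  have hkey : ∀ g : A, ∑ ω, (x ω + t * d ω) * u ω g
      = ∑ ω, x ω * u ω g + t * ∑ ω, d ω * u ω g := by
    intro g
    rw [Finset.mul_sum, ← Finset.sum_add_distrib]
    exact Finset.sum_congr rfl fun ω _ => by ring
  have hy_act : ∀ a, ∑ ω, (x ω + t * d ω) * u ω a ≤ ∑ ω, (x ω + t * d ω) * u ω a0 := by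
    intro a
    rw [hkey a, hkey a0, hdact a]
    linarith [hx.2 a]
  refine ⟨t, ht, ⟨⟨hy_nonneg, hy_sum⟩, hy_act⟩, ?_⟩
  have hsub : (Finset.univ.filter fun ω => x ω + t * d ω ≠ 0) ⊆
      (Finset.univ.filter fun ω => x ω ≠ 0) := by
    intro ω hω
    simp only [Finset.mem_filter, Finset.mem_univ, true_and] at hω ⊢
    intro hx0
    exact hω (by rw [hx0, hdsupp ω hx0, mul_zero, add_zero])
  refine (Finset.ssubset_iff_of_subset hsub).mpr ⟨ω₁, ?_, ?_⟩
  · simp only [Finset.mem_filter, Finset.mem_univ, true_and]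
    exact (hxpos ω₁ hω₁N).ne'
  · simp only [Finset.mem_filter, Finset.mem_univ, true_and, not_not]
    exact hy₁

lemma pset_mem_hull (u : Fin n → A → ℝ) (a0 : A) :
    ∀ (k : ℕ) (x : Fin n → ℝ), x ∈ Pset u a0 →
      (Finset.univ.filter fun ω => x ω ≠ 0).card ≤ k → x ∈ convexHull ℝ (Dset u a0) := by
  intro k
  induction k with
  | zero =>
    intro x hx hcard
    exact subset_convexHull ℝ _ ⟨hx, le_trans hcard (Nat.zero_le _)⟩
  | succ k ih =>
    intro x hx hcard
    by_cases hA : (Finset.univ.filter fun ω => x ω ≠ 0).card ≤ Fintype.card A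
    · exact subset_convexHull ℝ _ ⟨hx, hA⟩
    push_neg at hA
    obtain ⟨d, hd0, hdsupp0, hdsum, hdact⟩ := exists_kernel_dir u a0 _ hA
    have hdsupp : ∀ ω, x ω = 0 → d ω = 0 := fun ω h => hdsupp0 ω (by simp [h])
    have hNne : (Finset.univ.filter fun ω => d ω < 0).Nonempty := by
      rw [Finset.filter_nonempty_iff]
      by_contra h
      push_neg at h
      apply hd0
      funext ω
      exact (Finset.sum_eq_zero_iff_of_nonneg
        (fun i _ => h i (Finset.mem_univ i))).mp hdsum ω (Finset.mem_univ ω)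
    have hPne : (Finset.univ.filter fun ω => (-d) ω < 0).Nonempty := by
      rw [Finset.filter_nonempty_iff]
      by_contra h
      push_neg at h
      apply hd0
      funext ω
      have hnp : ∀ i ∈ Finset.univ, d i ≤ 0 := by
        intro i _
        have := h i (Finset.mem_univ i)
        simp only [Pi.neg_apply, not_lt, neg_nonneg] at this
        exact this
      exact (Finset.sum_eq_zero_iff_of_nonpos hnp).mp hdsum ω (Finset.mem_univ ω)
    obtain ⟨tp, htp, hyP, hysub⟩ := push_lemma u a0 x hx d hdsupp hdsum hdact hNne
    obtain ⟨tm, htm, hzP, hzsub⟩ := push_lemma u a0 x hx (-d)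
      (fun ω h => by simp [hdsupp ω h])
      (by simpa using congrArg Neg.neg hdsum)
      (fun a => by
        simp only [Pi.neg_apply, neg_mul, Finset.sum_neg_distrib]
        rw [hdact a]) hPne
    have hy := ih _ hyP (by
      have := Finset.card_lt_card hysub
      omega)
    have hz := ih _ hzP (by
      have := Finset.card_lt_card hzsub
      omega)
    have hs : (0:ℝ) < tp + tm := by linarith
    have hsne : tp + tm ≠ 0 := hs.ne'
    have hcomb := (convex_convexHull ℝ (Dset u a0)) hy hz
      (a := tm / (tp + tm)) (b := tp / (tp + tm))
      (by positivity) (by positivity) (by field_simp; ring)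
    have hxeq : (tm / (tp + tm)) • (fun ω => x ω + tp * d ω)
        + (tp / (tp + tm)) • (fun ω => x ω + tm * (-d) ω) = x := by
      funext ω
      simp only [Pi.add_apply, Pi.smul_apply, smul_eq_mul, Pi.neg_apply]
      field_simp
      ring
    rw [← hxeq]
    exact hcomb

lemma card_le_of_affineIndependent_sum_one {ι : Type} [Fintype ι] [Nonempty ι] (hn : 1 ≤ n)
    (z : ι → Fin n → ℝ) (hz : ∀ i, ∑ ω, z i ω = 1) (haff : AffineIndependent ℝ z) :
    Fintype.card ι ≤ n := by
  classical
  let L : (Fin n → ℝ) →ₗ[ℝ] ℝ :=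
    { toFun := fun x => ∑ ω, x ω
      map_add' := fun x y => by simp [Finset.sum_add_distrib]
      map_smul' := fun r x => by simp [Finset.mul_sum] }
  have hLone : L (fun _ => (1:ℝ)) = (n : ℝ) := by simp [L]
  have hLtop : LinearMap.ker L ≠ ⊤ := by
    intro h
    have h1 : (fun _ => (1:ℝ)) ∈ LinearMap.ker L := by rw [h]; trivial
    rw [LinearMap.mem_ker, hLone] at h1
    have : (n : ℝ) ≠ 0 := by
      have : (0:ℝ) < (n:ℝ) := by exact_mod_cast Nat.lt_of_lt_of_le Nat.zero_lt_one hn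
      exact this.ne'
    exact this h1
  have hker : Module.finrank ℝ (LinearMap.ker L) < n := by
    have h2 := Submodule.finrank_lt hLtop
    simpa [Module.finrank_pi] using h2
  have hspan : vectorSpan ℝ (Set.range z) ≤ LinearMap.ker L := by
    rw [vectorSpan_def]
    apply Submodule.span_le.mpr
    intro v hv
    rw [Set.mem_vsub] at hv
    obtain ⟨p, ⟨i, rfl⟩, q, ⟨j, rfl⟩, rfl⟩ := hv
    simp only [SetLike.mem_coe, LinearMap.mem_ker, vsub_eq_sub]
    show ∑ ω, (z i - z j) ω = 0
    simp [Pi.sub_apply, Finset.sum_sub_distrib, hz i, hz j]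
  have h1 := haff.finrank_vectorSpan_add_one
  have h2 : Module.finrank ℝ (vectorSpan ℝ (Set.range z))
      ≤ Module.finrank ℝ (LinearMap.ker L) := Submodule.finrank_mono hspan
  omega

/-- when `θ = μ`, there is a feasible family attaining the supremum of
the single-type problem (which equals `C(μ)`) with at most `n` signals in which every
posterior has at most `|A|` nonzero coordinates. -/
theorem stmt13 (hn : 1 ≤ n) (u : Fin n → A → ℝ)
    (μ θ : Fin n → ℝ) (hμ : μ ∈ simplex n) (hθ : θ ∈ simplex n)
    (hθpos : ∀ ω, 0 < θ ω) (hθμ : θ = μ) :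
    sSup (ConcaveSet u μ θ) = Cost u μ ∧
    ∃ (m : ℕ) (φ : Fin m → ℝ) (η : Fin m → Fin n → ℝ),
      m ≤ n ∧
      (∀ s, 0 ≤ φ s) ∧ (∀ s, η s ∈ simplex n) ∧
      (∀ ω, ∑ s, φ s * η s ω = θ ω) ∧
      (∑ s, φ s * Ratio μ θ (η s) * Cost u (η s)) = sSup (ConcaveSet u μ θ) ∧
      (∀ s, (Finset.univ.filter (fun ω => η s ω ≠ 0)).card ≤ Fintype.card A) := by
  subst hθμ
  obtain ⟨a0, -, ha0⟩ := Finset.exists_mem_eq_sup' Finset.univ_nonempty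
    (fun a => ∑ ω, θ ω * u ω a)
  have hθP : θ ∈ Pset u a0 := ⟨hθ, fun a => by
    rw [← ha0]
    exact Finset.le_sup' (fun a => ∑ ω, θ ω * u ω a) (Finset.mem_univ a)⟩
  have hCost : Cost u θ = ∑ ω, θ ω * uStar u ω - ∑ ω, θ ω * u ω a0 := by
    rw [Cost, ha0]
  have hub : ∀ v ∈ ConcaveSet u θ θ, v ≤ Cost u θ := by
    rintro v ⟨m, φ, η, hφ, hη, hmarg, rfl⟩
    calc ∑ s, φ s * Ratio θ θ (η s) * Cost u (η s)
        = ∑ s, φ s * Cost u (η s) := by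
          refine Finset.sum_congr rfl fun s _ => ?_
          rw [ratio_eq_one θ hθpos (hη s), mul_one]
      _ ≤ ∑ s, φ s * (∑ ω, η s ω * (uStar u ω - u ω a0)) := by
          refine Finset.sum_le_sum fun s _ => mul_le_mul_of_nonneg_left ?_ (hφ s)
          rw [Cost]
          have h1 : ∑ ω, η s ω * u ω a0
              ≤ Finset.univ.sup' Finset.univ_nonempty (fun a => ∑ ω, η s ω * u ω a) :=
            Finset.le_sup' (fun a => ∑ ω, η s ω * u ω a) (Finset.mem_univ a0)
          have h2 : ∑ ω, η s ω * (uStar u ω - u ω a0)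
              = ∑ ω, η s ω * uStar u ω - ∑ ω, η s ω * u ω a0 := by
            simp [mul_sub, Finset.sum_sub_distrib]
          linarith
      _ = ∑ ω, (∑ s, φ s * η s ω) * (uStar u ω - u ω a0) := sum_swap_helper φ η _
      _ = ∑ ω, θ ω * (uStar u ω - u ω a0) :=
          Finset.sum_congr rfl fun ω _ => by rw [hmarg ω]
      _ = Cost u θ := by rw [hCost]; simp [mul_sub, Finset.sum_sub_distrib]
  have hmem : Cost u θ ∈ ConcaveSet u θ θ := by
    refine ⟨1, fun _ => 1, fun _ => θ, fun _ => zero_le_one, fun _ => hθ,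
      fun ω => by simp, ?_⟩
    simp [ratio_eq_one θ hθpos hθ]
  have hsup : sSup (ConcaveSet u θ θ) = Cost u θ := IsGreatest.csSup_eq ⟨hmem, hub⟩
  refine ⟨hsup, ?_⟩
  have hhull : θ ∈ convexHull ℝ (Dset u a0) := by
    refine pset_mem_hull u a0 n θ hθP ?_
    calc (Finset.univ.filter fun ω => θ ω ≠ 0).card
        ≤ (Finset.univ : Finset (Fin n)).card := Finset.card_filter_le _ _
      _ = n := by simp
  obtain ⟨ι, hι, z, w, hrange, haff, hwpos, hwsum, hcomb⟩ :=
    eq_pos_convex_span_of_mem_convexHull hhull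
  haveI hne : Nonempty ι := by
    rcases isEmpty_or_nonempty ι with hE | hNE
    · exfalso; simp at hwsum
    · exact hNE
  have hzD : ∀ i : ι, z i ∈ Dset u a0 := fun i => hrange (Set.mem_range_self i)
  have hcard : Fintype.card ι ≤ n :=
    card_le_of_affineIndependent_sum_one hn z (fun i => (hzD i).1.1.2) haff
  set m := Fintype.card ι with hm
  set e := Fintype.equivFin ι with he
  have hmarg' : ∀ ω, ∑ i, w i * z i ω = θ ω := by
    intro ω
    have h := congrFun hcomb ω
    simpa [Finset.sum_apply] using h
  have hobj : ∀ i : ι, w i * Ratio θ θ (z i) * Cost u (z i)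
      = w i * (∑ ω, z i ω * (uStar u ω - u ω a0)) := by
    intro i
    have hD := hzD i
    have hsup'' : Finset.univ.sup' Finset.univ_nonempty (fun a => ∑ ω, z i ω * u ω a)
        = ∑ ω, z i ω * u ω a0 :=
      le_antisymm (Finset.sup'_le _ _ fun a _ => hD.1.2 a)
        (Finset.le_sup' (fun a => ∑ ω, z i ω * u ω a) (Finset.mem_univ a0))
    rw [ratio_eq_one θ hθpos hD.1.1, mul_one, Cost, hsup'']
    congr 1
    simp [mul_sub, Finset.sum_sub_distrib]
  refine ⟨m, fun s => w (e.symm s), fun s => z (e.symm s), hcard,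
    fun s => (hwpos _).le, fun s => (hzD _).1.1, ?_, ?_, fun s => (hzD _).2⟩
  · intro ω
    exact (Fintype.sum_equiv e.symm _ (fun i => w i * z i ω) (fun s => rfl)).trans
      (hmarg' ω)
  · rw [hsup]
    calc ∑ s, w (e.symm s) * Ratio θ θ (z (e.symm s)) * Cost u (z (e.symm s))
        = ∑ i, w i * Ratio θ θ (z i) * Cost u (z i) :=
          Fintype.sum_equiv e.symm _ _ (fun s => rfl)
      _ = ∑ i, w i * (∑ ω, z i ω * (uStar u ω - u ω a0)) :=
          Finset.sum_congr rfl fun i _ => hobj i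
      _ = ∑ ω, (∑ i, w i * z i ω) * (uStar u ω - u ω a0) := sum_swap_helper w z _
      _ = ∑ ω, θ ω * (uStar u ω - u ω a0) :=
          Finset.sum_congr rfl fun ω _ => by rw [hmarg' ω]
      _ = Cost u θ := by rw [hCost]; simp [mul_sub, Finset.sum_sub_distrib]

end
end

section
/- Fix a vector π ∈ [0,1]^n and a price p ∈ ℝ, and define the positively homogeneous extension Ĉ(x) = Σ_ω x_ω·u*(ω) − max_{a∈A} Σ_ω x_ω·u(ω,a) for x ∈ ℝ^n with x ≥ 0 (so that Ĉ(k·x) = k·Ĉ(x) for k ≥ 0 and Ĉ is concave). Then the set of buyer types willing to pay p after signal probabilities π, namely Λ = {θ ∈ Δ_n : Ĉ(θ₁π₁, …, θ_nπ_n) ≥ p·Σ_ω θ_ω·π_ω}, is a convex subset of Δ_n. -/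
open Finset
open scoped Classical

noncomputable section

variable {n : ℕ} {A : Type*} [Fintype A] [Nonempty A]

/-- The positively homogeneous extension of the cost of uncertainty:
`Ĉ(x) = Σ_ω x_ω u*(ω) − max_a Σ_ω x_ω u(ω,a)`. -/
def ChatCost (u : Fin n → A → ℝ) (x : Fin n → ℝ) : ℝ :=
  ∑ ω, x ω * uStar u ω
    - Finset.univ.sup' Finset.univ_nonempty (fun a => ∑ ω, x ω * u ω a)

/-- the set of buyer types in the simplex willing to pay price `p` after
a signal with probabilities `π`, i.e.
`Λ = {θ ∈ Δ_n : Ĉ(θ₁π₁, …, θ_nπ_n) ≥ p·Σ_ω θ_ω π_ω}`, is convex. -/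
theorem stmt16 (hn : 1 ≤ n) (u : Fin n → A → ℝ)
    (π : Fin n → ℝ) (hπ0 : ∀ ω, 0 ≤ π ω) (hπ1 : ∀ ω, π ω ≤ 1) (p : ℝ) :
    Convex ℝ {θ : Fin n → ℝ | θ ∈ simplex n ∧
      p * ∑ ω, θ ω * π ω ≤ ChatCost u (fun ω => θ ω * π ω)} := by

  intro x hx y hy a b ha hb hab
  obtain ⟨⟨hx0, hx1⟩, hxC⟩ := hx
  obtain ⟨⟨hy0, hy1⟩, hyC⟩ := hy
  refine ⟨⟨fun ω => by
      have := hx0 ω; have := hy0 ω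
      simp only [Pi.add_apply, Pi.smul_apply, smul_eq_mul]
      positivity,
    by
      simp only [Pi.add_apply, Pi.smul_apply, smul_eq_mul]
      rw [Finset.sum_add_distrib, ← Finset.mul_sum, ← Finset.mul_sum, hx1, hy1]
      linarith⟩, ?_⟩
  have hz : ∀ ω, (a • x + b • y) ω * π ω = a * (x ω * π ω) + b * (y ω * π ω) := by
    intro ω; simp [Pi.add_apply, Pi.smul_apply, smul_eq_mul]; ring
  have hsup : Finset.univ.sup' Finset.univ_nonempty
      (fun a' : A => ∑ ω, (a • x + b • y) ω * π ω * u ω a')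
      ≤ a * Finset.univ.sup' Finset.univ_nonempty (fun a' : A => ∑ ω, x ω * π ω * u ω a')
        + b * Finset.univ.sup' Finset.univ_nonempty (fun a' : A => ∑ ω, y ω * π ω * u ω a') := by
    apply Finset.sup'_le
    intro c _
    have h1 : (∑ ω, x ω * π ω * u ω c)
        ≤ Finset.univ.sup' Finset.univ_nonempty (fun a' : A => ∑ ω, x ω * π ω * u ω a') :=
      Finset.le_sup' (fun a' : A => ∑ ω, x ω * π ω * u ω a') (Finset.mem_univ c)
    have h2 : (∑ ω, y ω * π ω * u ω c)
        ≤ Finset.univ.sup' Finset.univ_nonempty (fun a' : A => ∑ ω, y ω * π ω * u ω a') :=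
      Finset.le_sup' (fun a' : A => ∑ ω, y ω * π ω * u ω a') (Finset.mem_univ c)
    have : (∑ ω, (a • x + b • y) ω * π ω * u ω c)
        = a * (∑ ω, x ω * π ω * u ω c) + b * (∑ ω, y ω * π ω * u ω c) := by
      rw [Finset.mul_sum, Finset.mul_sum, ← Finset.sum_add_distrib]
      apply Finset.sum_congr rfl
      intro ω _
      rw [hz ω]; ring
    rw [this]
    have := mul_le_mul_of_nonneg_left h1 ha
    have := mul_le_mul_of_nonneg_left h2 hb
    linarith
  have hfirst : (∑ ω, (a • x + b • y) ω * π ω * uStar u ω)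
      = a * (∑ ω, x ω * π ω * uStar u ω) + b * (∑ ω, y ω * π ω * uStar u ω) := by
    rw [Finset.mul_sum, Finset.mul_sum, ← Finset.sum_add_distrib]
    apply Finset.sum_congr rfl
    intro ω _
    rw [hz ω]; ring
  have hlhs : p * ∑ ω, (a • x + b • y) ω * π ω
      = a * (p * ∑ ω, x ω * π ω) + b * (p * ∑ ω, y ω * π ω) := by
    have : (∑ ω, (a • x + b • y) ω * π ω)
        = a * (∑ ω, x ω * π ω) + b * (∑ ω, y ω * π ω) := by
      rw [Finset.mul_sum, Finset.mul_sum, ← Finset.sum_add_distrib]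
      exact Finset.sum_congr rfl fun ω _ => hz ω
    rw [this]; ring
  simp only [Set.mem_setOf_eq, ChatCost] at hxC hyC ⊢
  rw [hlhs, hfirst]
  have := mul_le_mul_of_nonneg_left hxC ha
  have := mul_le_mul_of_nonneg_left hyC hb
  linarith


end
end
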